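/- arXiv:2401.00108 — 8 statements merged into one kernel-verified Lean document; each statement's English description precedes it below -/
import Mathlib

section
/- Let F be ℓ-weakly convex and hidden convex on X with moduli μ_c > 0 and μ_H ≥ 0, let x̄ ∈ X satisfy 0 ∈ ∂Φ(x̄) (a stationary point of Φ := F + δ_X), and suppose the map c is Fréchet differentiable at x̄. Then x̄ is a global minimizer of F over X, i.e., F(x̄) ≤ F(x) for all x ∈ X. -/
open MeasureTheory
open scoped RealInnerProductSpace

noncomputable section

/-- `F` is hidden convex on `X` with moduli `μc > 0` and `μH ≥ 0`, witnessed by the convex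
set `U`, the bijection `c : X → U` satisfying `‖c x - c y‖ ≥ μc * ‖x - y‖`, and the
(`μH`-strongly) convex function `H : U → ℝ` with `F = H ∘ c` on `X`, where `H` attains its
minimum over `U` at `ustar`. -/
def HiddenConvex {d : ℕ} (μc μH : ℝ) (X U : Set (EuclideanSpace ℝ (Fin d)))
    (c : EuclideanSpace ℝ (Fin d) → EuclideanSpace ℝ (Fin d)) (H F : EuclideanSpace ℝ (Fin d) → ℝ) (ustar : EuclideanSpace ℝ (Fin d)) : Prop :=
  Convex ℝ U ∧ Set.BijOn c X U ∧
    (∀ x ∈ X, ∀ y ∈ X, μc * ‖x - y‖ ≤ ‖c x - c y‖) ∧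
    (∀ x ∈ X, F x = H (c x)) ∧
    (∀ u ∈ U, ∀ v ∈ U, ∀ t ∈ Set.Icc (0 : ℝ) 1,
      H ((1 - t) • u + t • v) ≤
        (1 - t) * H u + t * H v - (1 - t) * t * μH / 2 * ‖u - v‖ ^ 2) ∧
    ustar ∈ U ∧ ∀ u ∈ U, H ustar ≤ H u

/-- `F` is `ℓ`-weakly convex: `x ↦ F x + ℓ/2 ‖x‖²` is convex on `ℝ^d`. -/
def WeaklyConvex {d : ℕ} (ℓ : ℝ) (F : EuclideanSpace ℝ (Fin d) → ℝ) : Prop :=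
  ConvexOn ℝ Set.univ fun x => F x + ℓ / 2 * ‖x‖ ^ 2

/-- `g` belongs to the Fréchet subdifferential of `Φ = F + δ_X` at `x ∈ X`:
`F y ≥ F x + ⟪g, y - x⟫ + o(‖y - x‖)` as `y → x` within `X`. -/
def FrechetSubdiffAt {d : ℕ} (X : Set (EuclideanSpace ℝ (Fin d))) (F : EuclideanSpace ℝ (Fin d) → ℝ) (x g : EuclideanSpace ℝ (Fin d)) : Prop :=
  ∀ ε > 0, ∀ᶠ y in nhdsWithin x X, F x + ⟪g, y - x⟫ - ε * ‖y - x‖ ≤ F y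

/-- Proposition 3.1: every stationary point of a weakly convex, hidden convex function
(with `c` differentiable there) is a global minimizer over `X`. -/
theorem stationary_point_is_global_min {d : ℕ}
    (X U : Set (EuclideanSpace ℝ (Fin d))) (hXne : X.Nonempty) (hXcl : IsClosed X) (hXcvx : Convex ℝ X)
    (F H : EuclideanSpace ℝ (Fin d) → ℝ) (c : EuclideanSpace ℝ (Fin d) → EuclideanSpace ℝ (Fin d)) (μc μH ℓ : ℝ)
    (hμc : 0 < μc) (hμH : 0 ≤ μH) (hℓ : 0 ≤ ℓ) (ustar : EuclideanSpace ℝ (Fin d))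
    (hHC : HiddenConvex μc μH X U c H F ustar)
    (hWC : WeaklyConvex ℓ F)
    (xbar : EuclideanSpace ℝ (Fin d)) (hxbar : xbar ∈ X)
    (hstat : FrechetSubdiffAt X F xbar 0)
    (hdiff : DifferentiableWithinAt ℝ c X xbar) :
    ∀ x ∈ X, F xbar ≤ F x := by
  obtain ⟨hUcvx, hbij, hlip, hFH, hHcvx, husU, hmin⟩ := hHC
  have hu0U : c xbar ∈ U := hbij.mapsTo hxbar
  set u0 := c xbar with hu0
  set C := ‖ustar - u0‖ / μc with hC
  have hC0 : 0 ≤ C := div_nonneg (norm_nonneg _) hμc.le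
  have key : ∀ ε > 0, H u0 - H ustar ≤ ε * C := by
    intro ε hε
    have hev := hstat ε hε
    rw [Filter.Eventually, Metric.mem_nhdsWithin_iff] at hev
    obtain ⟨δ, hδ, hball⟩ := hev
    set t := min (δ / (2 * (C + 1) * (ε + 1))) (1/2 : ℝ) with ht
    have ht0 : 0 < t := lt_min (by positivity) (by norm_num)
    have ht1 : t ≤ 1 := le_trans (min_le_right _ _) (by norm_num)
    set u := (1 - t) • u0 + t • ustar with hu
    have huU : u ∈ U := hUcvx hu0U husU (by linarith) ht0.le (by ring)
    obtain ⟨xt, hxtX, hxtc⟩ := hbij.surjOn huU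
    have hdistc : μc * ‖xt - xbar‖ ≤ ‖c xt - c xbar‖ := hlip xt hxtX xbar hxbar
    have hnormu : ‖c xt - c xbar‖ = t * ‖ustar - u0‖ := by
      rw [hxtc, ← hu0]
      have h1 : u - u0 = t • (ustar - u0) := by rw [hu]; module
      rw [h1, norm_smul, Real.norm_eq_abs, abs_of_pos ht0]
    have hxtb : ‖xt - xbar‖ ≤ t * C := by
      rw [hC, ← mul_div_assoc, le_div_iff₀ hμc]
      calc ‖xt - xbar‖ * μc = μc * ‖xt - xbar‖ := by ring
        _ ≤ ‖c xt - c xbar‖ := hdistc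
        _ = t * ‖ustar - u0‖ := hnormu
    have htc : t * C < δ := by
      have h2 : t ≤ δ / (2 * (C + 1) * (ε + 1)) := min_le_left _ _
      have h3 : 0 < 2 * (C + 1) * (ε + 1) := by positivity
      rw [le_div_iff₀ h3] at h2
      nlinarith [ht0.le, hC0]
    have hmem : dist xt xbar < δ := by
      rw [dist_eq_norm]; exact lt_of_le_of_lt hxtb htc
    have hineq := hball ⟨Metric.mem_ball.mpr hmem, hxtX⟩
    simp only [Set.mem_setOf_eq, inner_zero_left] at hineq
    have hFxt : F xt = H u := by rw [hFH xt hxtX, hxtc]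
    have hFxb : F xbar = H u0 := hFH xbar hxbar
    have hHu : H u ≤ (1 - t) * H u0 + t * H ustar := by
      have h5 := hHcvx u0 hu0U ustar husU t ⟨ht0.le, ht1⟩
      rw [← hu] at h5
      nlinarith [mul_nonneg (mul_nonneg (mul_nonneg (by linarith : (0:ℝ) ≤ 1 - t) ht0.le) hμH) (sq_nonneg ‖u0 - ustar‖)]
    have hchain : t * (H u0 - H ustar) ≤ ε * (t * C) := by
      have h4 : ε * ‖xt - xbar‖ ≤ ε * (t * C) := by
        exact mul_le_mul_of_nonneg_left hxtb hε.le
      rw [hFxt, hFxb] at hineq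
      nlinarith
    have := (mul_le_mul_iff_right₀ ht0).mp (by linarith [hchain] : t * (H u0 - H ustar) ≤ t * (ε * C))
    linarith
  have hΔ : H u0 ≤ H ustar := by
    by_contra hcon
    push_neg at hcon
    have h3 : (0:ℝ) < 2 * (C + 1) := by positivity
    have hε : 0 < (H u0 - H ustar) / (2 * (C + 1)) := div_pos (by linarith) h3
    have hkey := key _ hε
    rw [div_mul_eq_mul_div, le_div_iff₀ h3] at hkey
    nlinarith
  intro x hx
  rw [hFH x hx, hFH xbar hxbar]
  exact le_trans hΔ (hmin _ (hbij.mapsTo hx))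
end
end

section
/- Let F be ℓ-weakly convex and hidden convex on X with moduli μ_c > 0 and μ_H ≥ 0, let the map c be continuously differentiable on X, and suppose U = c(X) is bounded with diameter D_U := sup_{u,v ∈ U} ‖u − v‖ > 0. Then for every x ∈ X and every s ∈ ∂Φ(x) (Fréchet subdifferential of Φ := F + δ_X), one has ‖s‖ ≥ (μ_c / D_U)(F(x) − F*), i.e., hidden convexity implies the weak gradient domination property. -/
open MeasureTheory
open scoped RealInnerProductSpace

noncomputable section

/-- Proposition 3.2 (i): hidden convexity implies weak gradient domination. -/
theorem weak_gradient_domination {d : ℕ}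
    (X U : Set (EuclideanSpace ℝ (Fin d))) (hXne : X.Nonempty) (hXcl : IsClosed X) (hXcvx : Convex ℝ X)
    (F H : EuclideanSpace ℝ (Fin d) → ℝ) (c : EuclideanSpace ℝ (Fin d) → EuclideanSpace ℝ (Fin d))
    (c' : EuclideanSpace ℝ (Fin d) → EuclideanSpace ℝ (Fin d) →L[ℝ] EuclideanSpace ℝ (Fin d))
    (μc μH ℓ DU : ℝ) (hμc : 0 < μc) (hμH : 0 ≤ μH) (hℓ : 0 ≤ ℓ)
    (ustar xstar : EuclideanSpace ℝ (Fin d))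
    (hHC : HiddenConvex μc μH X U c H F ustar)
    (hWC : WeaklyConvex ℓ F)
    (hderiv : ∀ x ∈ X, HasFDerivWithinAt c (c' x) X x)
    (hc'cont : ContinuousOn c' X)
    (hUbdd : Bornology.IsBounded U) (hDU : DU = Metric.diam U) (hDUpos : 0 < DU)
    (hxstar : xstar ∈ X) (hcxstar : c xstar = ustar) :
    ∀ x ∈ X, ∀ s : EuclideanSpace ℝ (Fin d), FrechetSubdiffAt X F x s →
      μc / DU * (F x - F xstar) ≤ ‖s‖ := by
  obtain ⟨hU, hBij, hlip, hFH, hHcvx, hust, hmin⟩ := hHC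
  intro x hx s hs
  have hcx : c x ∈ U := hBij.mapsTo hx
  have hFx : F x = H (c x) := hFH x hx
  have hFstar : F xstar = H ustar := by rw [hFH xstar hxstar, hcxstar]
  have key : ∀ ε > (0:ℝ), F x - F xstar ≤ (‖s‖ + ε) * (DU / μc) := by
    intro ε hε
    obtain ⟨δ, hδ, hball⟩ := Metric.mem_nhdsWithin_iff.mp (hs ε hε)
    set t : ℝ := min 1 (δ * μc / (2 * DU)) with ht
    have htpos : 0 < t := lt_min one_pos (by positivity)
    have ht1 : t ≤ 1 := min_le_left _ _
    have hut : (1 - t) • c x + t • ustar ∈ U :=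
      hU hcx hust (by linarith) htpos.le (by ring)
    obtain ⟨y, hy, hcy⟩ := hBij.surjOn hut
    have hnorm : ‖c y - c x‖ = t * ‖ustar - c x‖ := by
      rw [hcy]
      have h1 : (1 - t) • c x + t • ustar - c x = t • (ustar - c x) := by
        module
      rw [h1, norm_smul, Real.norm_of_nonneg htpos.le]
    have hdiam : ‖ustar - c x‖ ≤ DU := by
      rw [hDU, ← dist_eq_norm]
      exact Metric.dist_le_diam_of_mem hUbdd hust hcx
    have hyx : μc * ‖y - x‖ ≤ t * DU := by
      calc μc * ‖y - x‖ ≤ ‖c y - c x‖ := hlip y hy x hx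
        _ = t * ‖ustar - c x‖ := hnorm
        _ ≤ t * DU := by nlinarith
    have hyxle : ‖y - x‖ ≤ t * DU / μc := by
      rw [le_div_iff₀ hμc]; linarith
    have hyclose : dist y x < δ := by
      rw [dist_eq_norm]
      have h2 : t ≤ δ * μc / (2 * DU) := min_le_right _ _
      have h3 : t * DU / μc ≤ δ / 2 := by
        rw [div_le_div_iff₀ hμc two_pos]
        have := mul_le_mul_of_nonneg_right h2 (le_of_lt hDUpos)
        calc t * DU * 2 ≤ (δ * μc / (2 * DU)) * DU * 2 := by nlinarith
          _ = δ * μc := by field_simp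
      linarith
    have hFy1 : F x + ⟪s, y - x⟫ - ε * ‖y - x‖ ≤ F y :=
      hball ⟨Metric.mem_ball.mpr hyclose, hy⟩
    have hFy2 : F y ≤ (1 - t) * F x + t * F xstar := by
      rw [hFH y hy, hcy, hFx, hFstar]
      have hconv := hHcvx (c x) hcx ustar hust t ⟨htpos.le, ht1⟩
      nlinarith [sq_nonneg ‖c x - ustar‖,
        mul_nonneg (mul_nonneg (mul_nonneg (by linarith : (0:ℝ) ≤ 1 - t) htpos.le) hμH)
          (sq_nonneg ‖c x - ustar‖)]
    have hCS : -⟪s, y - x⟫ ≤ ‖s‖ * ‖y - x‖ := by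
      have h4 := abs_real_inner_le_norm s (y - x)
      have h5 := neg_abs_le ⟪s, y - x⟫
      linarith
    have h6 : t * (F x - F xstar) ≤ (‖s‖ + ε) * ‖y - x‖ := by nlinarith
    have h7 : (‖s‖ + ε) * ‖y - x‖ ≤ (‖s‖ + ε) * (t * DU / μc) :=
      mul_le_mul_of_nonneg_left hyxle (by positivity)
    have h8 : t * (F x - F xstar) ≤ t * ((‖s‖ + ε) * (DU / μc)) := by
      calc t * (F x - F xstar) ≤ (‖s‖ + ε) * (t * DU / μc) := h6.trans h7
        _ = t * ((‖s‖ + ε) * (DU / μc)) := by ring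
    exact le_of_mul_le_mul_left h8 htpos
  have hle : F x - F xstar ≤ ‖s‖ * (DU / μc) := by
    refine le_of_forall_pos_le_add fun ε' hε' => ?_
    have hk := key (ε' * μc / DU) (by positivity)
    have heq : (‖s‖ + ε' * μc / DU) * (DU / μc) = ‖s‖ * (DU / μc) + ε' := by
      field_simp
    linarith [heq ▸ hk]
  rw [div_mul_eq_mul_div, div_le_iff₀ hDUpos]
  have h9 : μc * (F x - F xstar) ≤ μc * (‖s‖ * (DU / μc)) :=
    mul_le_mul_of_nonneg_left hle hμc.le
  have h10 : μc * (‖s‖ * (DU / μc)) = ‖s‖ * DU := by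
    field_simp
  linarith
end
end

section
/- Let X have nonempty interior, let F be ℓ-weakly convex and (μ_c, μ_H)-hidden strongly convex on X with μ_H > 0, and let the map c be continuously differentiable on X. Then for every x ∈ X and every s ∈ ∂Φ(x) (Fréchet subdifferential of Φ := F + δ_X), one has ‖s‖² ≥ 2 μ_H μ_c² (F(x) − F*), i.e., hidden strong convexity implies the strong gradient domination (Polyak–Łojasiewicz type) property. -/
open MeasureTheory
open scoped RealInnerProductSpace

noncomputable section

set_option maxHeartbeats 1000000 in
/-- Proposition 3.2 (ii): hidden strong convexity implies strong gradient domination (PL). -/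
theorem strong_gradient_domination {d : ℕ}
    (X U : Set (EuclideanSpace ℝ (Fin d))) (hXne : X.Nonempty) (hXcl : IsClosed X) (hXcvx : Convex ℝ X)
    (hXint : (interior X).Nonempty)
    (F H : EuclideanSpace ℝ (Fin d) → ℝ) (c : EuclideanSpace ℝ (Fin d) → EuclideanSpace ℝ (Fin d))
    (c' : EuclideanSpace ℝ (Fin d) → EuclideanSpace ℝ (Fin d) →L[ℝ] EuclideanSpace ℝ (Fin d))
    (μc μH ℓ : ℝ) (hμc : 0 < μc) (hμH : 0 < μH) (hℓ : 0 ≤ ℓ)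
    (ustar xstar : EuclideanSpace ℝ (Fin d))
    (hHC : HiddenConvex μc μH X U c H F ustar)
    (hWC : WeaklyConvex ℓ F)
    (hderiv : ∀ x ∈ X, HasFDerivWithinAt c (c' x) X x)
    (hc'cont : ContinuousOn c' X)
    (hxstar : xstar ∈ X) (hcxstar : c xstar = ustar) :
    ∀ x ∈ X, ∀ s : EuclideanSpace ℝ (Fin d), FrechetSubdiffAt X F x s →
      2 * μH * μc ^ 2 * (F x - F xstar) ≤ ‖s‖ ^ 2 := by
  obtain ⟨hU, hBij, hLip, hFH, hH, hust, hmin⟩ := hHC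
  intro x hx s hs
  obtain ⟨u, hu_def⟩ : ∃ u, u = c x := ⟨_, rfl⟩
  have hu : u ∈ U := hu_def ▸ hBij.mapsTo hx
  obtain ⟨D, hD_def⟩ : ∃ D, D = ‖u - ustar‖ := ⟨_, rfl⟩
  have hD0 : 0 ≤ D := hD_def ▸ norm_nonneg _
  have hFx : F x = H u := hu_def ▸ hFH x hx
  have hFxs : F xstar = H ustar := by rw [hFH xstar hxstar, hcxstar]
  have key : ∀ ε : ℝ, 0 < ε → ε ≤ 1 →
      μc * (F x - F xstar) ≤ (‖s‖ + ε) * D - (1 - ε) * (μc * μH / 2) * D ^ 2 := by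
    intro ε hε hε1
    have hev := hs ε hε
    rw [eventually_nhdsWithin_iff, Metric.eventually_nhds_iff] at hev
    obtain ⟨δ, hδ, hδev⟩ := hev
    have hD0' : 0 ≤ D := hD_def ▸ norm_nonneg _
    obtain ⟨t, ht0, htε, ht2⟩ : ∃ t : ℝ, 0 < t ∧ t ≤ ε ∧ t ≤ δ * μc / (2 * (D + 1)) :=
      ⟨min ε (δ * μc / (2 * (D + 1))), lt_min hε (by positivity), min_le_left _ _,
        min_le_right _ _⟩
    have ht1 : t ≤ 1 := le_trans htε hε1
    have htδ : t * D < δ * μc := by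
      have h3 : δ * μc / (2 * (D + 1)) * D < δ * μc := by
        rw [div_mul_eq_mul_div, div_lt_iff₀ (by positivity)]
        nlinarith [mul_pos hδ hμc]
      nlinarith
    have hut : (1 - t) • u + t • ustar ∈ U :=
      hU hu hust (by linarith) ht0.le (by ring)
    obtain ⟨xt, hxtX, hcxt⟩ := hBij.surjOn hut
    have hdiff : c xt - c x = t • (ustar - u) := by
      rw [hcxt, hu_def]; module
    have hnorm : ‖c xt - c x‖ = t * D := by
      rw [hdiff, norm_smul, Real.norm_eq_abs, abs_of_pos ht0, norm_sub_rev, ← hD_def]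
    have hlip := hLip xt hxtX x hx
    rw [hnorm] at hlip
    have hxtx : ‖xt - x‖ < δ := by
      by_contra hcon
      push_neg at hcon
      nlinarith
    have hsub := hδev (by rwa [dist_eq_norm]) hxtX
    have hHineq := hH u hu ustar hust t ⟨ht0.le, ht1⟩
    rw [← hcxt, ← hD_def] at hHineq
    have hFxt : F xt = H (c xt) := hFH xt hxtX
    have hinner : -(‖s‖ * ‖xt - x‖) ≤ ⟪s, xt - x⟫ := by
      have h := abs_real_inner_le_norm s (xt - x)
      cases abs_le.mp h with | intro h1 h2 => linarith
    have hh0 : 0 ≤ ‖xt - x‖ := norm_nonneg _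
    have hchain : F x - (‖s‖ + ε) * ‖xt - x‖ ≤
        (1 - t) * F x + t * F xstar - (1 - t) * t * μH / 2 * D ^ 2 := by
      rw [hFx, hFxs]
      linarith [hsub, hHineq, hFxt, hinner, hFx]
    have hA : t * (F x - F xstar) ≤
        (‖s‖ + ε) * ‖xt - x‖ - (1 - t) * t * μH / 2 * D ^ 2 := by linarith [hchain]
    have hB1 := mul_le_mul_of_nonneg_left hA hμc.le
    have hB2 := mul_le_mul_of_nonneg_left hlip (by positivity : (0:ℝ) ≤ ‖s‖ + ε)
    have hmain : t * μc * (F x - F xstar) ≤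
        (‖s‖ + ε) * (t * D) - (1 - t) * t * (μc * μH / 2) * D ^ 2 := by
      linarith [hB1, hB2]
    have h5' : (1 - ε) * t ≤ (1 - t) * t :=
      mul_le_mul_of_nonneg_right (by linarith) ht0.le
    have h5 : (1 - ε) * t * ((μc * μH / 2) * D ^ 2) ≤ (1 - t) * t * ((μc * μH / 2) * D ^ 2) :=
      mul_le_mul_of_nonneg_right h5' (by positivity)
    refine le_of_mul_le_mul_left ?_ ht0
    linarith [hmain, h5]

  have hB : μc * (F x - F xstar) ≤ ‖s‖ * D - μc * μH / 2 * D ^ 2 := by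
    refine le_of_forall_pos_le_add fun ε hε => ?_
    have hC0 : (0:ℝ) ≤ D + μc * μH / 2 * D ^ 2 := by positivity
    set ε' := min 1 (ε / (D + μc * μH / 2 * D ^ 2 + 1)) with hε'_def
    have hε'0 : 0 < ε' := lt_min one_pos (by positivity)
    have h := key ε' hε'0 (min_le_left _ _)
    have hε'le : ε' ≤ ε / (D + μc * μH / 2 * D ^ 2 + 1) := min_le_right _ _
    have h2 : ε' * (D + μc * μH / 2 * D ^ 2) ≤ ε := by
      have h3 : ε' * (D + μc * μH / 2 * D ^ 2 + 1) ≤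
          ε / (D + μc * μH / 2 * D ^ 2 + 1) * (D + μc * μH / 2 * D ^ 2 + 1) :=
        mul_le_mul_of_nonneg_right hε'le (by positivity)
      rw [div_mul_cancel₀ _ (by positivity : (D + μc * μH / 2 * D ^ 2 + 1) ≠ 0)] at h3
      nlinarith
    nlinarith [h, h2]
  nlinarith [sq_nonneg (‖s‖ - μH * μc * D),
    mul_le_mul_of_nonneg_left hB (by positivity : (0:ℝ) ≤ 2 * μH * μc)]
end
end

section
/- Let F be (μ_c, μ_H)-hidden strongly convex on X with μ_H > 0, and let x* ∈ X be the minimizer of F over X. Then F satisfies the quadratic growth condition F(x) − F(x*) ≥ (μ_H μ_c² / 2)‖x − x*‖² for every x ∈ X; in particular, the minimizer x* is unique. -/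
open MeasureTheory
open scoped RealInnerProductSpace

noncomputable section

/-- Hidden strong convexity implies quadratic growth; in particular the minimizer is unique. -/
theorem quadratic_growth {d : ℕ}
    (X U : Set (EuclideanSpace ℝ (Fin d))) (hXne : X.Nonempty) (hXcl : IsClosed X) (hXcvx : Convex ℝ X)
    (F H : EuclideanSpace ℝ (Fin d) → ℝ) (c : EuclideanSpace ℝ (Fin d) → EuclideanSpace ℝ (Fin d)) (μc μH : ℝ)
    (hμc : 0 < μc) (hμH : 0 < μH) (ustar xstar : EuclideanSpace ℝ (Fin d))
    (hHC : HiddenConvex μc μH X U c H F ustar)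
    (hxstar : xstar ∈ X) (hcxstar : c xstar = ustar) :
    (∀ x ∈ X, μH * μc ^ 2 / 2 * ‖x - xstar‖ ^ 2 ≤ F x - F xstar) ∧
      ∀ y ∈ X, (∀ x ∈ X, F y ≤ F x) → y = xstar := by
  obtain ⟨hU, hbij, hlip, hFH, hsc, hust, hmin⟩ := hHC
  -- main growth estimate
  have key : ∀ x ∈ X, μH * μc ^ 2 / 2 * ‖x - xstar‖ ^ 2 ≤ F x - F xstar := by
    intro x hx
    have hcx : c x ∈ U := hbij.1 hx
    have hD : 0 ≤ H (c x) - H ustar := sub_nonneg.2 (hmin _ hcx)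
    set s : ℝ := ‖ustar - c x‖ ^ 2 with hs
    have hs0 : 0 ≤ s := by positivity
    -- for all t ∈ (0,1], (1-t)*(μH/2*s) ≤ D
    have step : ∀ t : ℝ, 0 < t → t ≤ 1 →
        (1 - t) * (μH / 2 * s) ≤ H (c x) - H ustar := by
      intro t ht0 ht1
      have h := hsc ustar hust (c x) hcx t ⟨le_of_lt ht0, ht1⟩
      have hmid : H ustar ≤ H ((1 - t) • ustar + t • c x) := by
        apply hmin
        exact hU hust hcx (by linarith) (le_of_lt ht0) (by ring)
      have he : (1 - t) * t * μH / 2 * ‖ustar - c x‖ ^ 2 =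
          t * ((1 - t) * (μH / 2 * s)) := by rw [hs]; ring
      have h4 : t * ((1 - t) * (μH / 2 * s)) ≤ t * (H (c x) - H ustar) := by
        linarith [h, hmid, he]
      exact le_of_mul_le_mul_left h4 ht0
    have main : μH / 2 * s ≤ H (c x) - H ustar := by
      by_contra hcon
      push_neg at hcon
      set A : ℝ := μH / 2 * s
      set D : ℝ := H (c x) - H ustar
      have hA0 : 0 < A := lt_of_le_of_lt hD hcon
      have ht : (0 : ℝ) < (A - D) / (2 * A) := by
        apply div_pos (by linarith) (by linarith)
      have ht1 : (A - D) / (2 * A) ≤ 1 := by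
        rw [div_le_one (by linarith)]
        linarith
      have := step _ ht ht1
      have hne : (2 * A) ≠ 0 := by positivity
      have : (1 - (A - D) / (2 * A)) * A = (A + D) / 2 := by
        field_simp
        ring
      nlinarith [step _ ht ht1]
    -- transfer via the Lipschitz-type bound
    have hlb : μc * ‖x - xstar‖ ≤ ‖c x - c xstar‖ := hlip x hx xstar hxstar
    have hnorm : ‖ustar - c x‖ = ‖c x - c xstar‖ := by
      rw [hcxstar, norm_sub_rev]
    have hsq : μc ^ 2 * ‖x - xstar‖ ^ 2 ≤ s := by
      rw [hs, hnorm]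
      have h1 : 0 ≤ μc * ‖x - xstar‖ := by positivity
      nlinarith [hlb]
    have hFx : F x = H (c x) := hFH x hx
    have hFxs : F xstar = H ustar := by rw [hFH xstar hxstar, hcxstar]
    rw [hFx, hFxs]
    calc μH * μc ^ 2 / 2 * ‖x - xstar‖ ^ 2
        = μH / 2 * (μc ^ 2 * ‖x - xstar‖ ^ 2) := by ring
      _ ≤ μH / 2 * s := by nlinarith
      _ ≤ H (c x) - H ustar := main
  refine ⟨key, ?_⟩
  intro y hy hymin
  have h1 := key y hy
  have h2 : F y ≤ F xstar := hymin xstar hxstar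
  have h3 : F xstar ≤ F y := by
    rw [hFH y hy, hFH xstar hxstar, hcxstar]
    exact hmin _ (hbij.1 hy)
  have hz : ‖y - xstar‖ ^ 2 ≤ 0 := by
    have hc : 0 < μH * μc ^ 2 / 2 := by positivity
    by_contra hpos
    push_neg at hpos
    nlinarith [mul_pos hc hpos]
  have : ‖y - xstar‖ = 0 := by nlinarith [norm_nonneg (y - xstar), sq_nonneg ‖y - xstar‖]
  have := norm_eq_zero.mp this
  exact sub_eq_zero.mp this
end
end

section
/- Let F : ℝ^d → ℝ be ℓ-weakly convex with ℓ > 0 and hidden convex on X with moduli μ_c > 0 and μ_H ≥ 0. Set ρ = 2ℓ and let 0 < η ≤ 1/(2ℓ). Fix x ∈ X, let g be a square-integrable random vector with E[g] ∈ ∂F(x) and E‖g‖² ≤ G_F², and set x⁺ := Π_X(x − η g) and x̂ := prox_{Φ/ρ}(x), where Φ := F + δ_X. Then for every α with 0 < α ≤ ηℓ: E[Φ_{1/ρ}(x⁺)] − F* ≤ (1 − α)(Φ_{1/ρ}(x) − F*) + (3α²/(2μ_c²η) − (1−α)α μ_H/2)‖c(x̂) − c(x*)‖² + 8ℓη²G_F².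 -/
open MeasureTheory
open scoped RealInnerProductSpace

noncomputable section

/-- `q` is the Euclidean projection of `p` onto `X`. -/
def IsProjection {d : ℕ} (X : Set (EuclideanSpace ℝ (Fin d))) (p q : EuclideanSpace ℝ (Fin d)) : Prop :=
  q ∈ X ∧ ∀ y ∈ X, ‖q - p‖ ≤ ‖y - p‖

/-- The subdifferential of an `ℓ`-weakly convex function `F` at `x`. -/
def WCSubdiff {d : ℕ} (ℓ : ℝ) (F : EuclideanSpace ℝ (Fin d) → ℝ) (x : EuclideanSpace ℝ (Fin d)) : Set (EuclideanSpace ℝ (Fin d)) :=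
  {g | ∀ y, F x + ⟪g, y - x⟫ - ℓ / 2 * ‖y - x‖ ^ 2 ≤ F y}

/-- The Moreau envelope `Φ_{1/ρ}` of `Φ = F + δ_X`. -/
def MoreauEnv {d : ℕ} (X : Set (EuclideanSpace ℝ (Fin d))) (F : EuclideanSpace ℝ (Fin d) → ℝ) (ρ : ℝ) (x : EuclideanSpace ℝ (Fin d)) : ℝ :=
  sInf ((fun y => F y + ρ / 2 * ‖y - x‖ ^ 2) '' X)

/-- `q = prox_{Φ/ρ}(p)`, i.e. `q` minimizes `y ↦ F y + ρ/2 ‖y - p‖²` over `X`. -/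
def IsProx {d : ℕ} (X : Set (EuclideanSpace ℝ (Fin d))) (F : EuclideanSpace ℝ (Fin d) → ℝ) (ρ : ℝ) (p q : EuclideanSpace ℝ (Fin d)) : Prop :=
  q ∈ X ∧ ∀ y ∈ X, F q + ρ / 2 * ‖q - p‖ ^ 2 ≤ F y + ρ / 2 * ‖y - p‖ ^ 2

variable {d : ℕ}

local notation "E" => EuclideanSpace ℝ (Fin d)

lemma combo_norm_sq (u v : E) (t : ℝ) :
    ‖(1 - t) • u + t • v‖ ^ 2 = (1 - t) * ‖u‖ ^ 2 + t * ‖v‖ ^ 2 - (1 - t) * t * ‖u - v‖ ^ 2 := by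
  simp only [← real_inner_self_eq_norm_sq, inner_add_add_self, inner_sub_sub_self,
    real_inner_smul_left, real_inner_smul_right, real_inner_comm u v]
  ring

lemma proj_vi {X : Set E} (hX : Convex ℝ X) {p q : E} (h : IsProjection X p q)
    {z : E} (hz : z ∈ X) : ⟪p - q, z - q⟫ ≤ 0 := by
  by_contra hc
  push_neg at hc
  rcases eq_or_ne z q with rfl | hne
  · rw [sub_self] at hc; simp [inner_zero_right] at hc
  have hs0 : (0:ℝ) < ‖z - q‖ ^ 2 := pow_pos (norm_pos_iff.mpr (sub_ne_zero.mpr hne)) 2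
  set ci := ⟪p - q, z - q⟫ with hci
  set s := ‖z - q‖ ^ 2 with hsdef
  set t := min 1 (ci / s) with ht
  have ht0 : 0 < t := lt_min one_pos (div_pos hc hs0)
  have ht1 : t ≤ 1 := min_le_left _ _
  have hts : t * s ≤ ci := by
    have h' : t ≤ ci / s := min_le_right _ _
    calc t * s ≤ (ci / s) * s := by nlinarith
    _ = ci := by field_simp
  have hyX : (1 - t) • q + t • z ∈ X := hX h.1 hz (by linarith) (le_of_lt ht0) (by ring)
  have hle := h.2 _ hyX
  have hid : (1 - t) • q + t • z - p = (q - p) + t • (z - q) := by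
    module
  have hsq : ‖q - p‖ ^ 2 ≤ ‖(1 - t) • q + t • z - p‖ ^ 2 :=
    pow_le_pow_left₀ (norm_nonneg _) hle 2
  rw [hid, norm_add_sq_real] at hsq
  have h1 : ⟪q - p, t • (z - q)⟫ = t * ⟪q - p, z - q⟫ := real_inner_smul_right _ _ _
  have h2 : ⟪q - p, z - q⟫ = -ci := by
    rw [hci, show q - p = -(p - q) from (neg_sub p q).symm, inner_neg_left]
  have h3 : ‖t • (z - q)‖ ^ 2 = t ^ 2 * s := by
    rw [norm_smul]; simp [mul_pow, sq_abs, hsdef]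
  rw [h1, h2, h3] at hsq
  nlinarith [mul_pos ht0 hc]

lemma proj_self {X : Set E} {z : E} (hz : z ∈ X) : IsProjection X z z :=
  ⟨hz, fun y _ => by simp⟩

lemma proj_lip {X : Set E} (hX : Convex ℝ X) {p q p' q' : E}
    (h : IsProjection X p q) (h' : IsProjection X p' q') : ‖q - q'‖ ≤ ‖p - p'‖ := by
  have v1 : ⟪p - q, q' - q⟫ ≤ 0 := proj_vi hX h h'.1
  have v2 : ⟪p' - q', q - q'⟫ ≤ 0 := proj_vi hX h' h.1
  have h1 : 0 ≤ ⟪p - q, q - q'⟫ := by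
    rw [show q - q' = -(q' - q) from (neg_sub q' q).symm, inner_neg_right]
    linarith
  have hsplit : ⟪p - p', q - q'⟫ - ⟪q - q', q - q'⟫
      = ⟪p - q, q - q'⟫ - ⟪p' - q', q - q'⟫ := by
    rw [← inner_sub_left, ← inner_sub_left]
    congr 1
    abel
  have hself : ⟪q - q', q - q'⟫ = ‖q - q'‖ ^ 2 := real_inner_self_eq_norm_sq _
  have key : ‖q - q'‖ ^ 2 ≤ ⟪p - p', q - q'⟫ := by linarith
  have cs : ⟪p - p', q - q'⟫ ≤ ‖p - p'‖ * ‖q - q'‖ := real_inner_le_norm _ _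
  nlinarith [norm_nonneg (q - q'), norm_nonneg (p - p'),
    sq_nonneg (‖q - q'‖ - ‖p - p'‖), sq_nonneg (‖q - q'‖ + ‖p - p'‖)]

lemma proj_dist {X : Set E} (hX : Convex ℝ X) {p q : E}
    (h : IsProjection X p q) {z : E} (hz : z ∈ X) : ‖q - z‖ ≤ ‖p - z‖ :=
  proj_lip hX h (proj_self hz)

lemma proj_exists {X : Set E} (hXne : X.Nonempty) (hXcl : IsClosed X) (hXcvx : Convex ℝ X)
    (p : E) : ∃ q, IsProjection X p q := by
  obtain ⟨v, hvK, hv⟩ := exists_norm_eq_iInf_of_complete_convex hXne hXcl.isComplete hXcvx p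
  refine ⟨v, hvK, fun y hy => ?_⟩
  have hbdd : BddBelow (Set.range fun w : X => ‖p - w‖) :=
    ⟨0, Set.forall_mem_range.2 fun _ => norm_nonneg _⟩
  have : (⨅ w : X, ‖p - w‖) ≤ ‖p - y‖ := ciInf_le hbdd ⟨y, hy⟩
  rw [norm_sub_rev v p, hv, norm_sub_rev y p]
  exact this

lemma wc_combo {F : E → ℝ} {ℓ : ℝ}
    (hWC : ConvexOn ℝ Set.univ fun x => F x + ℓ / 2 * ‖x‖ ^ 2)
    (u v : E) (t : ℝ) (h0 : 0 ≤ t) (h1 : t ≤ 1) :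
    F ((1 - t) • u + t • v) ≤ (1 - t) * F u + t * F v + (1 - t) * t * (ℓ / 2) * ‖u - v‖ ^ 2 := by
  have h := hWC.2 (Set.mem_univ u) (Set.mem_univ v) (by linarith : (0:ℝ) ≤ 1 - t) h0 (by ring)
  simp only [smul_eq_mul] at h
  have hn' : ℓ / 2 * ‖(1 - t) • u + t • v‖ ^ 2
      = ℓ / 2 * ((1 - t) * ‖u‖ ^ 2 + t * ‖v‖ ^ 2 - (1 - t) * t * ‖u - v‖ ^ 2) := by
    rw [combo_norm_sq u v t]
  nlinarith [h, hn']

lemma prox_strong {X : Set E} (hXcvx : Convex ℝ X) {F : E → ℝ} {ℓ : ℝ} (hℓ : 0 < ℓ)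
    (hWC : ConvexOn ℝ Set.univ fun x => F x + ℓ / 2 * ‖x‖ ^ 2) {x xh : E} (hxh : xh ∈ X)
    (hopt : ∀ y ∈ X, F xh + ℓ * ‖xh - x‖ ^ 2 ≤ F y + ℓ * ‖y - x‖ ^ 2) :
    ∀ y ∈ X, F xh + ℓ * ‖xh - x‖ ^ 2 + ℓ / 2 * ‖y - xh‖ ^ 2 ≤ F y + ℓ * ‖y - x‖ ^ 2 := by
  intro y hy
  rcases eq_or_ne y xh with rfl | hne
  · simp
  have hc2 : 0 < ‖y - xh‖ ^ 2 := pow_pos (norm_pos_iff.mpr (sub_ne_zero.mpr hne)) 2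
  have claim : ∀ t : ℝ, 0 < t → t ≤ 1 →
      F xh + ℓ * ‖xh - x‖ ^ 2 ≤ F y + ℓ * ‖y - x‖ ^ 2 - (1 - t) * (ℓ / 2) * ‖y - xh‖ ^ 2 := by
    intro t ht0 ht1
    have hwX : (1 - t) • xh + t • y ∈ X := hXcvx hxh hy (by linarith) ht0.le (by ring)
    have hopt' := hopt _ hwX
    have hFw := wc_combo hWC xh y t ht0.le ht1
    have hid : (1 - t) • xh + t • y - x = (1 - t) • (xh - x) + t • (y - x) := by module
    have hnw : ‖(1 - t) • xh + t • y - x‖ ^ 2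
        = (1 - t) * ‖xh - x‖ ^ 2 + t * ‖y - x‖ ^ 2 - (1 - t) * t * ‖(xh - x) - (y - x)‖ ^ 2 := by
      rw [hid]; exact combo_norm_sq _ _ t
    rw [show (xh - x) - (y - x) = xh - y by abel] at hnw
    rw [show ‖xh - y‖ ^ 2 = ‖y - xh‖ ^ 2 by rw [norm_sub_rev]] at hnw hFw
    have hnw' : ℓ * ‖(1 - t) • xh + t • y - x‖ ^ 2
        = ℓ * ((1 - t) * ‖xh - x‖ ^ 2 + t * ‖y - x‖ ^ 2 - (1 - t) * t * ‖y - xh‖ ^ 2) := by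
      rw [hnw]
    have hcomb : F xh + ℓ * ‖xh - x‖ ^ 2 ≤ (1 - t) * (F xh + ℓ * ‖xh - x‖ ^ 2)
        + t * (F y + ℓ * ‖y - x‖ ^ 2) - (1 - t) * t * (ℓ / 2) * ‖y - xh‖ ^ 2 := by
      nlinarith [hopt', hFw, hnw']
    have ht' : t * (F xh + ℓ * ‖xh - x‖ ^ 2)
        ≤ t * (F y + ℓ * ‖y - x‖ ^ 2 - (1 - t) * (ℓ / 2) * ‖y - xh‖ ^ 2) := by
      nlinarith [hcomb]
    exact le_of_mul_le_mul_left ht' ht0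
  by_contra hlt
  push_neg at hlt
  have h1 := claim 1 one_pos le_rfl
  have hcpos : 0 < ℓ / 2 * ‖y - xh‖ ^ 2 := mul_pos (by positivity) hc2
  set c := ℓ / 2 * ‖y - xh‖ ^ 2 with hc
  set G1 := F xh + ℓ * ‖xh - x‖ ^ 2 with hG1
  set G2 := F y + ℓ * ‖y - x‖ ^ 2 with hG2
  -- hlt : G2 < G1 + c
  set t0 := (G1 + c - G2) / c with ht0def
  have ht0pos : 0 < t0 := div_pos (by linarith) hcpos
  have ht0le : t0 ≤ 1 := by rw [div_le_one hcpos]; linarith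
  have h2 := claim (t0 / 2) (by positivity) (by linarith)
  have ht0c : t0 * c = G1 + c - G2 := by
    rw [ht0def]; field_simp
  nlinarith [h2, ht0c]

lemma env_lb {F : E → ℝ} {ℓ : ℝ} (hℓ : 0 < ℓ) {x gbar : E}
    (hsub : ∀ y, F x + ⟪gbar, y - x⟫ - ℓ / 2 * ‖y - x‖ ^ 2 ≤ F y)
    (p z : E) :
    F x - 3 / (2 * ℓ) * ‖gbar‖ ^ 2 - 2 * ℓ * ‖x - p‖ ^ 2 ≤ F z + ℓ * ‖z - p‖ ^ 2 := by
  set T := 3 / (2 * ℓ) * ‖gbar‖ ^ 2 with hTdef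
  have hT : 2 * ℓ * T = 3 * ‖gbar‖ ^ 2 := by rw [hTdef]; field_simp
  have hcs : -(‖gbar‖ * ‖z - x‖) ≤ ⟪gbar, z - x⟫ := by
    have := abs_real_inner_le_norm gbar (z - x)
    have h2 := neg_abs_le (⟪gbar, z - x⟫)
    linarith
  have htri : ‖z - x‖ ≤ ‖z - p‖ + ‖x - p‖ := by
    have := dist_triangle z p x
    simpa [dist_eq_norm, norm_sub_rev p x] using this
  have key : 2 * ℓ * (F x - T - 2 * ℓ * ‖x - p‖ ^ 2) ≤ 2 * ℓ * (F z + ℓ * ‖z - p‖ ^ 2) := by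
    have hs := hsub z
    have hs' := mul_le_mul_of_nonneg_left hs (by positivity : (0:ℝ) ≤ 2 * ℓ)
    have hcs' := mul_le_mul_of_nonneg_left hcs (by positivity : (0:ℝ) ≤ 2 * ℓ)
    have htri' : 0 ≤ ℓ * ‖z - p‖ + ℓ * ‖x - p‖ - ℓ * ‖z - x‖ := by nlinarith [htri]
    nlinarith [hT, hs', hcs', sq_nonneg (ℓ * ‖z - p‖ - ℓ * ‖x - p‖ - ‖gbar‖),
      sq_nonneg (ℓ * ‖x - p‖ - ‖gbar‖),
      mul_nonneg (norm_nonneg gbar) htri',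
      mul_nonneg htri' (by positivity : (0:ℝ) ≤ ℓ * ‖z - p‖ + ℓ * ‖x - p‖ + ℓ * ‖z - x‖)]
  exact le_of_mul_le_mul_left key (by positivity)

lemma env_repr {X : Set E} (hXne : X.Nonempty) {F : E → ℝ} (hF : Continuous F) (ℓ : ℝ)
    (hbdd : ∀ p : E, BddBelow ((fun y => F y + ℓ * ‖y - p‖ ^ 2) '' X))
    (u : ℕ → E) (hu : ∀ n, u n ∈ X)
    (hdense : ∀ z ∈ X, ∀ ε > 0, ∃ n, dist (u n) z < ε) (p : E) :
    sInf ((fun y => F y + ℓ * ‖y - p‖ ^ 2) '' X) = ⨅ n, (F (u n) + ℓ * ‖u n - p‖ ^ 2) := by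
  set φ := fun y : E => F y + ℓ * ‖y - p‖ ^ 2 with hφ
  have hφc : Continuous φ := by
    apply hF.add
    exact continuous_const.mul ((continuous_id.sub continuous_const).norm.pow 2)
  have hbr : BddBelow (Set.range fun n => φ (u n)) := by
    obtain ⟨m, hm⟩ := hbdd p
    exact ⟨m, by rintro v ⟨n, rfl⟩; exact hm ⟨u n, hu n, rfl⟩⟩
  apply le_antisymm
  · exact le_ciInf fun n => csInf_le (hbdd p) ⟨u n, hu n, rfl⟩
  · apply le_csInf (hXne.image φ)
    rintro v ⟨z, hz, rfl⟩
    refine le_of_forall_pos_le_add fun ε hε => ?_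
    obtain ⟨δ, hδ0, hδ⟩ := Metric.continuousAt_iff.mp hφc.continuousAt ε hε
    obtain ⟨n, hn⟩ := hdense z hz δ hδ0
    have hlt : φ (u n) < φ z + ε := by
      have := hδ hn
      rw [Real.dist_eq] at this
      have := abs_lt.mp this
      linarith [this.2]
    calc (⨅ n, φ (u n)) ≤ φ (u n) := ciInf_le hbr n
      _ ≤ φ z + ε := hlt.le


lemma core_ineq {e α a b : ℝ} (he0 : 0 < e) (he2 : e ≤ 1/2) (hα0 : 0 < α) (hα : α ≤ e)
    (ha : 0 ≤ a) (hb : 0 ≤ b) :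
    2*e*(1+e)*(a+b)^2 ≤ 2*e*(1-α+3*e)*a^2 + 14*e^3*a^2 + 3*b^2 := by
  have hq : (3:ℝ)/2 ≤ 3 - 2*e - 2*e^2 := by nlinarith
  have h15 : 0 ≤ e*(1+15*e-18*e^2-14*e^3) := by nlinarith [mul_pos he0 he0, mul_pos (mul_pos he0 he0) he0]
  have hcoef : 2*e*(1+e)^2 ≤ (2*e-α+7*e^2)*(3-2*e-2*e^2) := by
    nlinarith [mul_nonneg (sub_nonneg.mpr hα) (by linarith : (0:ℝ) ≤ 3-2*e-2*e^2), h15]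
  have hp : 0 < 2*e - α + 7*e^2 := by nlinarith [sq_nonneg e]
  have h1 : 0 ≤ 2*e*((2*e-α+7*e^2)*a - (1+e)*b)^2 := by positivity
  have h2 : 0 ≤ ((2*e-α+7*e^2)*(3-2*e-2*e^2) - 2*e*(1+e)^2)*b^2 :=
    mul_nonneg (by linarith) (sq_nonneg b)
  have hid : (2*e-α+7*e^2) * (2*e*((2*e-α+7*e^2)*a^2) - 4*e*(1+e)*(a*b) + (3-2*e-2*e^2)*b^2)
      = 2*e*((2*e-α+7*e^2)*a - (1+e)*b)^2
        + ((2*e-α+7*e^2)*(3-2*e-2*e^2) - 2*e*(1+e)^2)*b^2 := by ring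
  have hQ : 0 ≤ (2*e-α+7*e^2) * (2*e*((2*e-α+7*e^2)*a^2) - 4*e*(1+e)*(a*b) + (3-2*e-2*e^2)*b^2) := by
    rw [hid]; linarith
  have hQ0 : 0 ≤ 2*e*((2*e-α+7*e^2)*a^2) - 4*e*(1+e)*(a*b) + (3-2*e-2*e^2)*b^2 :=
    nonneg_of_mul_nonneg_right hQ hp
  nlinarith [hQ0]


set_option maxHeartbeats 2000000 in
/-- Theorem 4.2: one-step descent of the Moreau envelope for the stochastic subgradient
method under hidden convexity. -/
theorem sgm_one_step_descent {d : ℕ}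
    {Ω : Type} [MeasurableSpace Ω] (μ : Measure Ω) [IsProbabilityMeasure μ]
    (X U : Set (EuclideanSpace ℝ (Fin d))) (hXne : X.Nonempty) (hXcl : IsClosed X) (hXcvx : Convex ℝ X)
    (F H : EuclideanSpace ℝ (Fin d) → ℝ) (c : EuclideanSpace ℝ (Fin d) → EuclideanSpace ℝ (Fin d)) (μc μH ℓ ρ η GF : ℝ)
    (hμc : 0 < μc) (hμH : 0 ≤ μH) (hℓ : 0 < ℓ) (ustar xstar : EuclideanSpace ℝ (Fin d))
    (hHC : HiddenConvex μc μH X U c H F ustar)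
    (hWC : WeaklyConvex ℓ F)
    (hxstar : xstar ∈ X) (hcxstar : c xstar = ustar)
    (hρ : ρ = 2 * ℓ) (hη0 : 0 < η) (hη : η ≤ 1 / (2 * ℓ))
    (x : EuclideanSpace ℝ (Fin d)) (hx : x ∈ X)
    (g : Ω → EuclideanSpace ℝ (Fin d)) (hg2 : MemLp g 2 μ)
    (hmean : (∫ ω, g ω ∂μ) ∈ WCSubdiff ℓ F x)
    (hGF : (∫ ω, ‖g ω‖ ^ 2 ∂μ) ≤ GF ^ 2)
    (xplus : Ω → EuclideanSpace ℝ (Fin d)) (hxplus : ∀ ω, IsProjection X (x - η • g ω) (xplus ω))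
    (xhat : EuclideanSpace ℝ (Fin d)) (hxhat : IsProx X F ρ x xhat) :
    ∀ α : ℝ, 0 < α → α ≤ η * ℓ →
      (∫ ω, MoreauEnv X F ρ (xplus ω) ∂μ) - F xstar ≤
        (1 - α) * (MoreauEnv X F ρ x - F xstar)
          + (3 * α ^ 2 / (2 * μc ^ 2 * η) - (1 - α) * α * μH / 2) * ‖c xhat - c xstar‖ ^ 2
          + 8 * ℓ * η ^ 2 * GF ^ 2 := by
  intro α hα0 hαle
  have hηℓ : 0 < η * ℓ := mul_pos hη0 hℓ
  have he2 : η * ℓ ≤ 1 / 2 := by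
    rw [le_div_iff₀ (by positivity : (0:ℝ) < 2 * ℓ)] at hη
    linarith
  have hα1 : α ≤ 1 / 2 := le_trans hαle he2
  obtain ⟨hUcvx, hbij, hlow, hFH, hHsc, hustU, hmin⟩ := hHC
  have hxhatX : xhat ∈ X := hxhat.1
  have huhU : c xhat ∈ U := hbij.mapsTo hxhatX
  set D := ‖c xhat - c xstar‖ with hD
  have hDu : ‖c xhat - ustar‖ = D := by rw [hD, hcxstar]
  have huαU : (1 - α) • (c xhat) + α • ustar ∈ U :=
    hUcvx huhU hustU (by linarith) hα0.le (by ring)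
  obtain ⟨xα, hxαX, hcxα⟩ := hbij.surjOn huαU
  set gbar := ∫ ω, g ω ∂μ with hgbar
  have hsub : ∀ y, F x + ⟪gbar, y - x⟫ - ℓ / 2 * ‖y - x‖ ^ 2 ≤ F y := hmean
  set envl : EuclideanSpace ℝ (Fin d) → ℝ :=
    fun p => sInf ((fun y => F y + ℓ * ‖y - p‖ ^ 2) '' X) with henvl
  have hrw : MoreauEnv X F ρ = envl := by
    funext p
    rw [MoreauEnv, henvl]
    congr 1
    apply Set.image_congr
    intro y _
    rw [hρ]; ring
  have hbdd : ∀ p, BddBelow ((fun y => F y + ℓ * ‖y - p‖ ^ 2) '' X) := fun p =>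
    ⟨F x - 3 / (2 * ℓ) * ‖gbar‖ ^ 2 - 2 * ℓ * ‖x - p‖ ^ 2, by
      rintro v ⟨z, hz, rfl⟩; exact env_lb hℓ hsub p z⟩
  have henv_le : ∀ p, ∀ z ∈ X, envl p ≤ F z + ℓ * ‖z - p‖ ^ 2 := fun p z hz =>
    csInf_le (hbdd p) ⟨z, hz, rfl⟩
  have henv_lb : ∀ p, F x - 3 / (2 * ℓ) * ‖gbar‖ ^ 2 - 2 * ℓ * ‖x - p‖ ^ 2 ≤ envl p := fun p =>
    le_csInf (hXne.image _) (by rintro v ⟨z, hz, rfl⟩; exact env_lb hℓ hsub p z)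
  have hprox : ∀ y ∈ X, F xhat + ℓ * ‖xhat - x‖ ^ 2 ≤ F y + ℓ * ‖y - x‖ ^ 2 := by
    intro y hy
    have h := hxhat.2 y hy
    rw [hρ, show 2 * ℓ / 2 = ℓ by ring] at h
    exact h
  have hstrong := prox_strong hXcvx hℓ hWC hxhatX hprox
  set a := ‖xhat - x‖ with ha
  set b := ‖xhat - xα‖ with hb
  have henvx : envl x = F xhat + ℓ * a ^ 2 := by
    apply le_antisymm (henv_le x xhat hxhatX)
    exact le_csInf (hXne.image _) (by rintro v ⟨z, hz, rfl⟩; exact hprox z hz)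
  have hFxhat : F xhat = H (c xhat) := hFH xhat hxhatX
  have hFxstar : F xstar = H ustar := by rw [hFH xstar hxstar, hcxstar]
  have hFxα : F xα = H ((1 - α) • (c xhat) + α • ustar) := by rw [hFH xα hxαX, hcxα]
  have hf2 : F xα ≤ (1 - α) * F xhat + α * F xstar - (1 - α) * α * μH / 2 * D ^ 2 := by
    have h := hHsc (c xhat) huhU ustar hustU α ⟨hα0.le, by linarith⟩
    rw [hFxα, hFxhat, hFxstar, ← hDu]
    exact h
  have hμb : μc * b ≤ α * D := by
    have h := hlow xhat hxhatX xα hxαX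
    rw [hcxα, show c xhat - ((1 - α) • (c xhat) + α • ustar) = α • (c xhat - ustar) by module,
      norm_smul, Real.norm_eq_abs, abs_of_pos hα0, hDu] at h
    exact h
  have hf3 : F xstar ≤ F xhat := by rw [hFxstar, hFxhat]; exact hmin _ huhU
  have hf4 : F xhat + ℓ * a ^ 2 + ℓ / 2 * a ^ 2 ≤ F x := by
    have h := hstrong x hx
    rw [show x - x = 0 by abel, norm_zero, show ‖x - xhat‖ = a by rw [ha, norm_sub_rev]] at h
    linarith only [h]
  -- integrability basics
  set γ := ∫ ω, ‖g ω‖ ^ 2 ∂μ with hγ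
  have hγ0 : 0 ≤ γ := integral_nonneg fun ω => sq_nonneg _
  have hgint : Integrable g μ := hg2.integrable one_le_two
  have hsqint : Integrable (fun ω => ‖g ω‖ ^ 2) μ :=
    (memLp_two_iff_integrable_sq_norm hg2.aestronglyMeasurable).mp hg2
  have hnint : Integrable (fun ω => ‖g ω‖) μ := hgint.norm
  have hgb2 : ‖gbar‖ ^ 2 ≤ γ := by
    set m := ∫ ω, ‖g ω‖ ∂μ with hm
    have hm0 : 0 ≤ m := integral_nonneg fun ω => norm_nonneg _
    have hexp : ∫ ω, (‖g ω‖ - m) ^ 2 ∂μ = γ - 2 * m * m + m ^ 2 := by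
      calc ∫ ω, (‖g ω‖ - m) ^ 2 ∂μ
          = ∫ ω, (‖g ω‖ ^ 2 - 2 * m * ‖g ω‖ + m ^ 2) ∂μ := by
            congr 1; funext ω; ring
        _ = (∫ ω, (‖g ω‖ ^ 2 - 2 * m * ‖g ω‖) ∂μ) + ∫ _, (m ^ 2 : ℝ) ∂μ :=
            integral_add (hsqint.sub (hnint.const_mul _)) (integrable_const _)
        _ = ((∫ ω, ‖g ω‖ ^ 2 ∂μ) - ∫ ω, 2 * m * ‖g ω‖ ∂μ) + m ^ 2 := by
            rw [integral_sub hsqint (hnint.const_mul _), integral_const]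
            simp [measure_univ]
        _ = γ - 2 * m * m + m ^ 2 := by rw [integral_const_mul, ← hγ, ← hm]
    have hv : 0 ≤ ∫ ω, (‖g ω‖ - m) ^ 2 ∂μ := integral_nonneg fun ω => sq_nonneg _
    have hJ : ‖gbar‖ ≤ m := by
      rw [hgbar, hm]; exact norm_integral_le_integral_norm g
    have hsq2 : ‖gbar‖ ^ 2 ≤ m ^ 2 := pow_le_pow_left₀ (norm_nonneg _) hJ 2
    linarith only [hsq2, hv, hexp]
  have hcs2 : -(‖gbar‖ * a) ≤ ⟪gbar, xhat - x⟫ := by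
    have h1 := abs_real_inner_le_norm gbar (xhat - x)
    have h2 := neg_abs_le (⟪gbar, xhat - x⟫)
    rw [← ha] at h1
    linarith only [h1, h2]
  have hla : ℓ * a ^ 2 ≤ ‖gbar‖ * a := by
    have h := hsub xhat
    rw [← ha] at h
    linarith only [h, hcs2, hf4]
  have ha0 : 0 ≤ a := norm_nonneg _
  have hb0 : 0 ≤ b := norm_nonneg _
  have hD0 : 0 ≤ D := norm_nonneg _
  have hf5 : ℓ ^ 2 * a ^ 2 ≤ GF ^ 2 := by
    rcases eq_or_lt_of_le (norm_nonneg (xhat - x)) with h0 | hpos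
    · rw [ha, ← h0]; linarith only [hγ0, hGF]
    · rw [← ha] at hpos
      have hlag : ℓ * a ≤ ‖gbar‖ := by
        have h' : (ℓ * a) * a ≤ ‖gbar‖ * a := by linarith only [hla]
        exact le_of_mul_le_mul_right h' hpos
      have hs2 : (ℓ * a) ^ 2 ≤ ‖gbar‖ ^ 2 :=
        pow_le_pow_left₀ (mul_nonneg hℓ.le ha0) hlag 2
      linarith only [hs2, hgb2, hGF]
  -- the comparison point and the per-sample bound
  set v := x - xα with hv
  have hinner_int : Integrable (fun ω => ⟪v, g ω⟫) μ := by
    have h := ContinuousLinearMap.integrable_comp (innerSL ℝ v) hgint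
    simpa using h
  have hhint : Integrable (fun ω =>
      (F xα + ℓ * ‖v‖ ^ 2) - 2 * η * ℓ * ⟪v, g ω⟫ + ℓ * η ^ 2 * ‖g ω‖ ^ 2) μ :=
    ((integrable_const _).sub (hinner_int.const_mul _)).add (hsqint.const_mul _)
  have hbint : Integrable (fun ω =>
      F x - 3 / (2 * ℓ) * ‖gbar‖ ^ 2 - 8 * ℓ * η ^ 2 * ‖g ω‖ ^ 2) μ :=
    (integrable_const _).sub (hsqint.const_mul _)
  have hφub : ∀ ω, envl (xplus ω) ≤
      (F xα + ℓ * ‖v‖ ^ 2) - 2 * η * ℓ * ⟪v, g ω⟫ + ℓ * η ^ 2 * ‖g ω‖ ^ 2 := by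
    intro ω
    have s1 : envl (xplus ω) ≤ F xα + ℓ * ‖xα - xplus ω‖ ^ 2 := henv_le _ xα hxαX
    have s2 : ‖xα - xplus ω‖ ≤ ‖v - η • g ω‖ := by
      rw [norm_sub_rev]
      have h := proj_dist hXcvx (hxplus ω) hxαX
      rwa [show x - η • g ω - xα = v - η • g ω by rw [hv]; abel] at h
    have s3 : ℓ * ‖v - η • g ω‖ ^ 2
        = ℓ * (‖v‖ ^ 2 - 2 * η * ⟪v, g ω⟫ + η ^ 2 * ‖g ω‖ ^ 2) := by
      rw [norm_sub_sq_real, real_inner_smul_right, norm_smul, Real.norm_eq_abs]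
      rw [mul_pow, sq_abs]
      ring
    have s4 : ‖xα - xplus ω‖ ^ 2 ≤ ‖v - η • g ω‖ ^ 2 :=
      pow_le_pow_left₀ (norm_nonneg _) s2 2
    have s5 : ℓ * ‖xα - xplus ω‖ ^ 2 ≤ ℓ * ‖v - η • g ω‖ ^ 2 :=
      mul_le_mul_of_nonneg_left s4 hℓ.le
    linarith only [s1, s5, s3]
  have hφlb : ∀ ω, F x - 3 / (2 * ℓ) * ‖gbar‖ ^ 2 - 8 * ℓ * η ^ 2 * ‖g ω‖ ^ 2
      ≤ envl (xplus ω) := by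
    intro ω
    have hl := henv_lb (xplus ω)
    have hd2 : ‖x - xplus ω‖ ≤ 2 * η * ‖g ω‖ := by
      have t1 : ‖x - (x - η • g ω)‖ = η * ‖g ω‖ := by
        rw [show x - (x - η • g ω) = η • g ω by abel, norm_smul, Real.norm_eq_abs,
          abs_of_pos hη0]
      have t2 : ‖xplus ω - (x - η • g ω)‖ ≤ ‖x - (x - η • g ω)‖ := (hxplus ω).2 x hx
      have t3 := dist_triangle x (x - η • g ω) (xplus ω)
      rw [dist_eq_norm, dist_eq_norm, dist_eq_norm,
        norm_sub_rev (x - η • g ω) (xplus ω)] at t3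
      linarith only [t1, t2, t3]
    have hsq' : ‖x - xplus ω‖ ^ 2 ≤ 4 * η ^ 2 * ‖g ω‖ ^ 2 := by
      have h' := pow_le_pow_left₀ (norm_nonneg (x - xplus ω)) hd2 2
      linarith only [h']
    have h'' := mul_le_mul_of_nonneg_left hsq' (by positivity : (0:ℝ) ≤ 2 * ℓ)
    linarith only [hl, h'']
  -- measurability of the envelope term
  haveI : Nonempty ↥X := hXne.to_subtype
  obtain ⟨u0, hu0⟩ := TopologicalSpace.exists_dense_seq ↥X
  have hunX : ∀ n, ((u0 n : EuclideanSpace ℝ (Fin d))) ∈ X := fun n => (u0 n).2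
  have hdense : ∀ z ∈ X, ∀ ε > 0, ∃ n, dist ((u0 n : EuclideanSpace ℝ (Fin d))) z < ε := by
    intro z hz ε hε
    have hmem := hu0 (⟨z, hz⟩ : X)
    rw [Metric.mem_closure_iff] at hmem
    obtain ⟨w, ⟨n, rfl⟩, hw⟩ := hmem ε hε
    refine ⟨n, ?_⟩
    rw [Subtype.dist_eq] at hw
    rw [dist_comm]
    exact hw
  have hWC' : ConvexOn ℝ Set.univ (fun y : EuclideanSpace ℝ (Fin d) => F y + ℓ / 2 * ‖y‖ ^ 2) := hWC
  have hfc : Continuous (fun y : EuclideanSpace ℝ (Fin d) => F y + ℓ / 2 * ‖y‖ ^ 2) := by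
    rw [← continuousOn_univ]
    exact hWC'.continuousOn isOpen_univ
  have hFc : Continuous F := by
    have hdec : F = fun y : EuclideanSpace ℝ (Fin d) =>
        (F y + ℓ / 2 * ‖y‖ ^ 2) - ℓ / 2 * ‖y‖ ^ 2 := by funext y; ring
    rw [hdec]
    exact hfc.sub (continuous_const.mul (continuous_norm.pow 2))
  have hrepr := env_repr hXne hFc ℓ hbdd _ hunX hdense
  have hQex := proj_exists hXne hXcl hXcvx
  have hQP : ∀ p, IsProjection X p ((hQex p).choose) := fun p => (hQex p).choose_spec
  have hxpQ : ∀ ω, xplus ω = (hQex (x - η • g ω)).choose := by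
    intro ω
    have h := proj_lip hXcvx (hxplus ω) (hQP (x - η • g ω))
    rw [sub_self, norm_zero] at h
    have h0 : ‖xplus ω - (hQex (x - η • g ω)).choose‖ = 0 :=
      le_antisymm h (norm_nonneg _)
    have := norm_eq_zero.mp h0
    exact sub_eq_zero.mp this
  have hQlip : LipschitzWith 1 (fun p => (hQex p).choose) :=
    LipschitzWith.of_dist_le_mul fun p q => by
      have h := proj_lip hXcvx (hQP p) (hQP q)
      simpa [dist_eq_norm] using h
  have hxplusm : AEStronglyMeasurable xplus μ := by
    have heq : xplus = fun ω => (hQex (x - η • g ω)).choose := funext hxpQ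
    rw [heq]
    exact hQlip.continuous.comp_aestronglyMeasurable
      (aestronglyMeasurable_const.sub (hg2.aestronglyMeasurable.const_smul η))
  have hφm : AEStronglyMeasurable (fun ω => envl (xplus ω)) μ := by
    have heq : (fun ω => envl (xplus ω)) = fun ω =>
        ⨅ n, (F ((u0 n : EuclideanSpace ℝ (Fin d)))
          + ℓ * ‖(u0 n : EuclideanSpace ℝ (Fin d)) - xplus ω‖ ^ 2) := by
      funext ω; exact hrepr (xplus ω)
    rw [heq]
    apply AEMeasurable.aestronglyMeasurable
    apply AEMeasurable.iInf
    intro n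
    have hcont : Continuous (fun p : EuclideanSpace ℝ (Fin d) =>
        F ((u0 n : EuclideanSpace ℝ (Fin d)))
          + ℓ * ‖(u0 n : EuclideanSpace ℝ (Fin d)) - p‖ ^ 2) :=
      continuous_const.add (continuous_const.mul
        (((continuous_const.sub continuous_id).norm).pow 2))
    exact (hcont.comp_aestronglyMeasurable hxplusm).aemeasurable
  have hφint : Integrable (fun ω => envl (xplus ω)) μ := by
    apply Integrable.mono' (hbint.abs.add hhint.abs) hφm
    filter_upwards with ω
    rw [Real.norm_eq_abs]
    have h1 := hφub ω
    have h2 := hφlb ω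
    refine abs_le.mpr ⟨?_, ?_⟩
    · have h4 := neg_abs_le (F x - 3 / (2 * ℓ) * ‖gbar‖ ^ 2 - 8 * ℓ * η ^ 2 * ‖g ω‖ ^ 2)
      have h3 := abs_nonneg ((F xα + ℓ * ‖v‖ ^ 2) - 2 * η * ℓ * ⟪v, g ω⟫ + ℓ * η ^ 2 * ‖g ω‖ ^ 2)
      simp only [Pi.add_apply, Pi.abs_apply]
      linarith only [h4, h3, h1, h2]
    · have h4 := le_abs_self ((F xα + ℓ * ‖v‖ ^ 2) - 2 * η * ℓ * ⟪v, g ω⟫ + ℓ * η ^ 2 * ‖g ω‖ ^ 2)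
      have h3 := abs_nonneg (F x - 3 / (2 * ℓ) * ‖gbar‖ ^ 2 - 8 * ℓ * η ^ 2 * ‖g ω‖ ^ 2)
      simp only [Pi.add_apply, Pi.abs_apply]
      linarith only [h4, h3, h1, h2]
  have hint1 : ∫ ω, ((F xα + ℓ * ‖v‖ ^ 2) - 2 * η * ℓ * ⟪v, g ω⟫ + ℓ * η ^ 2 * ‖g ω‖ ^ 2) ∂μ
      = (F xα + ℓ * ‖v‖ ^ 2) - 2 * η * ℓ * ⟪v, gbar⟫ + ℓ * η ^ 2 * γ := by
    have i0 : Integrable (fun _ : Ω => F xα + ℓ * ‖v‖ ^ 2) μ := integrable_const _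
    have iinn : Integrable (fun ω => 2 * η * ℓ * ⟪v, g ω⟫) μ := hinner_int.const_mul _
    have i1 : Integrable (fun ω => (F xα + ℓ * ‖v‖ ^ 2) - 2 * η * ℓ * ⟪v, g ω⟫) μ := i0.sub iinn
    have i2 : Integrable (fun ω => ℓ * η ^ 2 * ‖g ω‖ ^ 2) μ := hsqint.const_mul _
    rw [integral_add i1 i2, integral_sub i0 iinn, integral_const,
      integral_const_mul, integral_const_mul, integral_inner hgint v, ← hgbar, ← hγ]
    simp [measure_univ]
  have hPle : (∫ ω, envl (xplus ω) ∂μ)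
      ≤ (F xα + ℓ * ‖v‖ ^ 2) - 2 * η * ℓ * ⟪v, gbar⟫ + ℓ * η ^ 2 * γ := by
    rw [← hint1]
    exact integral_mono hφint hhint hφub
  have hsgα : -⟪v, gbar⟫ ≤ F xα - F x + ℓ / 2 * ‖v‖ ^ 2 := by
    have h := hsub xα
    have h1 : ⟪gbar, xα - x⟫ = -⟪v, gbar⟫ := by
      rw [show xα - x = -(x - xα) by abel, inner_neg_right, ← hv, real_inner_comm]
    have h2 : ‖xα - x‖ ^ 2 = ‖v‖ ^ 2 := by rw [hv, norm_sub_rev]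
    rw [h1, h2] at h
    linarith only [h]
  have hvab : ‖v‖ ≤ a + b := by
    have h := dist_triangle x xhat xα
    rw [dist_eq_norm, dist_eq_norm, dist_eq_norm] at h
    calc ‖v‖ = ‖x - xα‖ := by rw [hv]
      _ ≤ ‖x - xhat‖ + ‖xhat - xα‖ := h
      _ = a + b := by rw [ha, hb, norm_sub_rev x xhat]
  have hv2 : ‖v‖ ^ 2 ≤ (a + b) ^ 2 := pow_le_pow_left₀ (norm_nonneg v) hvab 2
  have hP2 : (∫ ω, envl (xplus ω) ∂μ) ≤ (1 + 2 * η * ℓ) * F xα - 2 * η * ℓ * F x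
      + ℓ * (1 + η * ℓ) * (a + b) ^ 2 + ℓ * η ^ 2 * γ := by
    have k1 : 2 * η * ℓ * (-⟪v, gbar⟫) ≤ 2 * η * ℓ * (F xα - F x + ℓ / 2 * ‖v‖ ^ 2) :=
      mul_le_mul_of_nonneg_left hsgα (by positivity)
    have k2 : ℓ * (1 + η * ℓ) * ‖v‖ ^ 2 ≤ ℓ * (1 + η * ℓ) * (a + b) ^ 2 :=
      mul_le_mul_of_nonneg_left hv2 (by positivity)
    linarith only [hPle, k1, k2]
  -- core algebraic inequality
  have hcore'' := core_ineq (e := η * ℓ) hηℓ he2 hα0 hαle ha0 hb0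
  have hcore' : 2 * η * (ℓ * (1 + η * ℓ) * (a + b) ^ 2)
      ≤ 2 * η * ((1 - α + 3 * (η * ℓ)) * (ℓ * a ^ 2) + 7 * ℓ * η ^ 2 * GF ^ 2) + 3 * b ^ 2 := by
    have hx14 := mul_le_mul_of_nonneg_left hf5
      (show (0:ℝ) ≤ 14 * η ^ 3 * ℓ by positivity)
    linarith only [hcore'', hx14]
  have hWident : 2 * η * (3 * α ^ 2 / (2 * μc ^ 2 * η) * D ^ 2) = 3 * (α ^ 2 * D ^ 2 / μc ^ 2) := by
    field_simp
  have hb2 : 3 * b ^ 2 ≤ 3 * (α ^ 2 * D ^ 2 / μc ^ 2) := by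
    rw [show 3 * (α ^ 2 * D ^ 2 / μc ^ 2) = 3 * (α ^ 2 * D ^ 2) / μc ^ 2 by ring,
      le_div_iff₀ (by positivity : (0:ℝ) < μc ^ 2)]
    have hsqb := pow_le_pow_left₀ (mul_nonneg hμc.le hb0) hμb 2
    linarith only [hsqb]
  have hcore : ℓ * (1 + η * ℓ) * (a + b) ^ 2
      ≤ (1 - α + 3 * (η * ℓ)) * (ℓ * a ^ 2) + 7 * ℓ * η ^ 2 * GF ^ 2
        + 3 * α ^ 2 / (2 * μc ^ 2 * η) * D ^ 2 := by
    have hchain : 2 * η * (ℓ * (1 + η * ℓ) * (a + b) ^ 2)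
        ≤ 2 * η * ((1 - α + 3 * (η * ℓ)) * (ℓ * a ^ 2) + 7 * ℓ * η ^ 2 * GF ^ 2
          + 3 * α ^ 2 / (2 * μc ^ 2 * η) * D ^ 2) := by
      have h3 : 3 * b ^ 2 ≤ 2 * η * (3 * α ^ 2 / (2 * μc ^ 2 * η) * D ^ 2) := by
        rw [hWident]; exact hb2
      linarith only [hcore', h3]
    exact le_of_mul_le_mul_left (by linarith only [hchain]) (by positivity : (0:ℝ) < 2 * η)
  -- final assembly
  rw [hrw, henvx]
  have k3 := mul_le_mul_of_nonneg_left hf2 (show (0:ℝ) ≤ 1 + 2 * η * ℓ by positivity)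
  have k4 := mul_le_mul_of_nonneg_left hf4 (show (0:ℝ) ≤ 2 * η * ℓ by positivity)
  have k5 : ℓ * η ^ 2 * γ ≤ ℓ * η ^ 2 * GF ^ 2 :=
    mul_le_mul_of_nonneg_left hGF (by positivity)
  have k6 : 0 ≤ 2 * (η * ℓ) * α * (F xhat - F xstar) :=
    mul_nonneg (by positivity) (sub_nonneg.mpr hf3)
  have k7 : 0 ≤ 2 * (η * ℓ) * ((1 - α) * α * μH / 2 * D ^ 2) := by
    have h1α : (0:ℝ) ≤ 1 - α := by linarith
    have h2' : (0:ℝ) ≤ (1 - α) * α * μH / 2 * D ^ 2 :=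
      mul_nonneg (div_nonneg (mul_nonneg (mul_nonneg h1α hα0.le) hμH) (by norm_num))
        (sq_nonneg D)
    exact mul_nonneg (by positivity) h2'
  linarith only [hP2, k3, k4, k5, k6, k7, hcore]
end
end

section
/- Let F : ℝ^d → ℝ be ℓ-weakly convex with ℓ > 0 and hidden convex on X with modulus μ_c > 0 and μ_H = 0, and suppose U = c(X) is bounded with diameter D_U > 0. Let (x^t)_{t≥0} be the projected stochastic subgradient iterates with step-size 0 < η ≤ 1/(2ℓ) and oracle bound G_F, set ρ = 2ℓ and Λ_t := E[Φ_{1/ρ}(x^t)] − F*. Then for every α with 0 < α ≤ ηℓ and every T ≥ 0: Λ_T ≤ (1 − α)^T Λ_0 + 3 D_U² α/(2 μ_c² η) + 8 ℓ η² G_F² / α. -/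
open MeasureTheory
open scoped RealInnerProductSpace

noncomputable section

/-- The filtration `𝔉_t := σ(g^0, …, g^(t-1))` generated by the stochastic oracle outputs. -/
def sgdFiltration {Ω : Type} [MeasurableSpace Ω] {d : ℕ}
    (g : ℕ → Ω → EuclideanSpace ℝ (Fin d)) (t : ℕ) : MeasurableSpace Ω :=
  ⨆ i ∈ Finset.range t, MeasurableSpace.comap (g i) inferInstance


open Filter
set_option maxHeartbeats 4000000

namespace SGMAux

lemma integrable_euclid_coord {Ω : Type} [inst : MeasurableSpace Ω] {μ : Measure Ω} {d : ℕ}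
    {f : Ω → EuclideanSpace ℝ (Fin d)} (hf : Integrable f μ) (i : Fin d) :
    Integrable (fun ω => f ω i) μ := by
  have : Integrable (fun ω => (EuclideanSpace.proj i : EuclideanSpace ℝ (Fin d) →L[ℝ] ℝ) (f ω)) μ :=
    ContinuousLinearMap.integrable_comp _ hf
  simpa [PiLp.proj_apply] using this

lemma integral_euclid_coord {Ω : Type} [inst : MeasurableSpace Ω] {μ : Measure Ω} {d : ℕ}
    {f : Ω → EuclideanSpace ℝ (Fin d)} (hf : Integrable f μ) (i : Fin d) :
    ∫ ω, f ω i ∂μ = (∫ ω, f ω ∂μ) i := by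
  have := ContinuousLinearMap.integral_comp_comm
    (EuclideanSpace.proj i : EuclideanSpace ℝ (Fin d) →L[ℝ] ℝ) hf
  simpa [PiLp.proj_apply] using this

lemma stronglyMeasurable_euclid_coord {Ω : Type} {m : MeasurableSpace Ω} {d : ℕ}
    {f : Ω → EuclideanSpace ℝ (Fin d)} (hf : StronglyMeasurable[m] f) (i : Fin d) :
    StronglyMeasurable[m] (fun ω => f ω i) := by
  have : StronglyMeasurable[m] (fun ω => (EuclideanSpace.proj i : EuclideanSpace ℝ (Fin d) →L[ℝ] ℝ) (f ω)) :=
    ((EuclideanSpace.proj i : EuclideanSpace ℝ (Fin d) →L[ℝ] ℝ).continuous).comp_stronglyMeasurable hf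
  simpa [PiLp.proj_apply] using this

lemma condexp_euclid_coord {Ω : Type} [inst : MeasurableSpace Ω] {μ : Measure Ω}
    [IsProbabilityMeasure μ] {m : MeasurableSpace Ω} (hm : m ≤ inst) {d : ℕ}
    {f : Ω → EuclideanSpace ℝ (Fin d)} (hf : Integrable f μ) (i : Fin d) :
    (fun ω => (μ[f|m]) ω i) =ᵐ[μ] μ[fun ω => f ω i|m] := by
  haveI : SigmaFinite (μ.trim hm) := by infer_instance
  letI : MeasurableSpace Ω := inst
  have hci : Integrable (μ[f|m]) μ := integrable_condExp
  refine ae_eq_condExp_of_forall_setIntegral_eq hm (integrable_euclid_coord (inst := inst) hf i) ?_ ?_ ?_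
  · intro s _ _
    exact (integrable_euclid_coord (inst := inst) hci i).integrableOn
  · intro s hs _
    rw [integral_euclid_coord (inst := inst) hci.integrableOn i,
      integral_euclid_coord (inst := inst) hf.integrableOn i, setIntegral_condExp hm hf hs]
  · exact StronglyMeasurable.aestronglyMeasurable (stronglyMeasurable_euclid_coord stronglyMeasurable_condExp i)

lemma coord_abs_le_norm {d : ℕ} (x : EuclideanSpace ℝ (Fin d)) (i : Fin d) : |x i| ≤ ‖x‖ := by
  rw [EuclideanSpace.norm_eq]
  have h1 : |x i| = Real.sqrt (|x i|^2) := by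
    rw [Real.sqrt_sq_eq_abs, abs_abs]
  rw [h1]
  apply Real.sqrt_le_sqrt
  have : |x i|^2 = ‖x i‖^2 := by simp
  rw [this]
  exact Finset.single_le_sum (f := fun j => ‖x j‖^2) (fun j _ => by positivity) (Finset.mem_univ i)

lemma norm_combo_sq {d : ℕ} (a b : EuclideanSpace ℝ (Fin d)) (t : ℝ) :
    ‖(1-t) • a + t • b‖^2 = (1-t)*‖a‖^2 + t*‖b‖^2 - t*(1-t)*‖a-b‖^2 := by
  have h1 : ‖(1-t) • a + t • b‖^2 = ‖(1-t) • a‖^2 + 2*⟪(1-t) • a, t • b⟫ + ‖t • b‖^2 :=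
    norm_add_sq_real _ _
  have h2 : ⟪(1-t) • a, t • b⟫ = (1-t)*t*⟪a,b⟫ := by
    rw [real_inner_smul_left, real_inner_smul_right]; ring
  have h3 : ‖(1-t) • a‖^2 = (1-t)^2*‖a‖^2 := by
    rw [norm_smul, Real.norm_eq_abs, mul_pow, sq_abs]
  have h4 : ‖t • b‖^2 = t^2*‖b‖^2 := by
    rw [norm_smul, Real.norm_eq_abs, mul_pow, sq_abs]
  have h5 : ‖a - b‖^2 = ‖a‖^2 - 2*⟪a,b⟫ + ‖b‖^2 := norm_sub_sq_real _ _
  rw [h1, h2, h3, h4, h5]; ring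

lemma nonneg_of_forall_add {c A : ℝ} (h : ∀ t : ℝ, 0 < t → t ≤ 1 → 0 ≤ A + t * c) : 0 ≤ A := by
  by_contra h'
  push_neg at h'
  rcases le_or_gt c 0 with hc | hc
  · have := h 1 one_pos le_rfl; nlinarith
  · have ht0 : 0 < min 1 (-A/(2*c)) := lt_min one_pos (div_pos (by linarith) (by linarith))
    have ht1 : min 1 (-A/(2*c)) ≤ 1 := min_le_left _ _
    have h2 := h _ ht0 ht1
    have h3 : min 1 (-A/(2*c)) * c ≤ (-A/(2*c)) * c :=
      mul_le_mul_of_nonneg_right (min_le_right _ _) hc.le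
    have h4 : (-A/(2*c)) * c = -A/2 := by field_simp
    nlinarith

lemma isProjection_dist_le {d : ℕ} {X : Set (EuclideanSpace ℝ (Fin d))} (hX : Convex ℝ X)
    {p q y : EuclideanSpace ℝ (Fin d)} (hq : IsProjection X p q) (hy : y ∈ X) :
    ‖y - q‖ ≤ ‖y - p‖ := by
  have hvi : ⟪q - p, y - q⟫ ≥ 0 := by
    have key : ∀ t : ℝ, 0 < t → t ≤ 1 → 0 ≤ 2*⟪q - p, y - q⟫ + t * ‖y - q‖^2 := by
      intro t ht0 ht1
      have hz : q + t • (y - q) ∈ X := by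
        have : q + t • (y - q) = (1 - t) • q + t • y := by module
        rw [this]
        exact hX hq.1 hy (by linarith) ht0.le (by ring)
      have h1 : ‖q - p‖ ≤ ‖q + t • (y - q) - p‖ := hq.2 _ hz
      have h2 : ‖q + t • (y - q) - p‖^2
          = ‖q - p‖^2 + 2*t*⟪q - p, y - q⟫ + t^2*‖y - q‖^2 := by
        have e : q + t • (y - q) - p = (q - p) + t • (y - q) := by abel
        rw [e, norm_add_sq_real, real_inner_smul_right, norm_smul, Real.norm_eq_abs, mul_pow,
          sq_abs]
        ring
      have h3 : ‖q - p‖^2 ≤ ‖q + t • (y - q) - p‖^2 :=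
        pow_le_pow_left₀ (norm_nonneg _) h1 2
      rw [h2] at h3
      have h4 : 0 ≤ 2*t*⟪q - p, y - q⟫ + t^2*‖y - q‖^2 := by linarith
      have h5 : t * (2*⟪q - p, y - q⟫ + t * ‖y - q‖^2) = 2*t*⟪q - p, y - q⟫ + t^2*‖y - q‖^2 := by
        ring
      nlinarith
    have h0 : 0 ≤ 2*⟪q - p, y - q⟫ + ‖y - q‖^2 * 0 := by
      have := nonneg_of_forall_add (c := ‖y - q‖^2) (A := 2*⟪q - p, y - q⟫) key
      linarith
    nlinarith
  have h1 : ‖y - p‖^2 = ‖y - q‖^2 - 2*⟪y - q, p - q⟫ + ‖p - q‖^2 := by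
    have : y - p = (y - q) - (p - q) := by abel
    rw [this, norm_sub_sq_real]
  have h2 : ⟪y - q, p - q⟫ ≤ 0 := by
    have e : ⟪y - q, p - q⟫ = -⟪q - p, y - q⟫ := by
      rw [real_inner_comm]
      have : p - q = -(q - p) := by abel
      rw [this, inner_neg_left]
    linarith
  have h3 : ‖y - q‖^2 ≤ ‖y - p‖^2 := by nlinarith [sq_nonneg ‖p - q‖]
  exact (pow_le_pow_iff_left₀ (norm_nonneg _) (norm_nonneg _) two_ne_zero).mp h3

lemma strong_min {d : ℕ} {ℓ : ℝ} (hℓ : 0 < ℓ) {F : EuclideanSpace ℝ (Fin d) → ℝ}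
    (hWC : WeaklyConvex ℓ F) {X : Set (EuclideanSpace ℝ (Fin d))} (hXcvx : Convex ℝ X)
    {z w : EuclideanSpace ℝ (Fin d)} (hw : w ∈ X)
    (hmin : ∀ y ∈ X, F w + ℓ*‖w - z‖^2 ≤ F y + ℓ*‖y - z‖^2)
    {y : EuclideanSpace ℝ (Fin d)} (hy : y ∈ X) :
    F w + ℓ*‖w - z‖^2 + ℓ/2*‖y - w‖^2 ≤ F y + ℓ*‖y - z‖^2 := by
  -- strong convexity of ψ := F (·) + ℓ‖· - z‖² along the segment [w, y]
  have hcombo : ∀ t : ℝ, 0 ≤ t → t ≤ 1 →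
      F ((1-t) • w + t • y) + ℓ*‖((1-t) • w + t • y) - z‖^2 ≤
        (1-t)*(F w + ℓ*‖w - z‖^2) + t*(F y + ℓ*‖y - z‖^2) - ℓ/2*t*(1-t)*‖w - y‖^2 := by
    intro t ht0 ht1
    have hcv := hWC.2 (Set.mem_univ w) (Set.mem_univ y) (by linarith : (0:ℝ) ≤ 1 - t) ht0
      (by ring)
    have e1 : ‖(1-t) • w + t • y‖^2 = (1-t)*‖w‖^2 + t*‖y‖^2 - t*(1-t)*‖w-y‖^2 :=
      norm_combo_sq w y t
    have e2 : ‖((1-t) • w + t • y) - z‖^2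
        = (1-t)*‖w-z‖^2 + t*‖y-z‖^2 - t*(1-t)*‖w-y‖^2 := by
      have e : ((1-t) • w + t • y) - z = (1-t) • (w - z) + t • (y - z) := by module
      rw [e, norm_combo_sq]
      congr 2
      rw [show (w - z) - (y - z) = w - y by abel]
    simp only [smul_eq_mul] at hcv
    nlinarith [hcv, e1, e2]
  have key : ∀ t : ℝ, 0 < t → t ≤ 1 →
      0 ≤ ((F y + ℓ*‖y - z‖^2) - (F w + ℓ*‖w - z‖^2) - ℓ/2*‖y - w‖^2) + t * (ℓ/2*‖y - w‖^2) := by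
    intro t ht0 ht1
    have h1 := hcombo t ht0.le ht1
    have h2 : w ∈ X → y ∈ X → (1-t) • w + t • y ∈ X := fun a b =>
      hXcvx a b (by linarith) ht0.le (by ring)
    have h3 := hmin _ (h2 hw hy)
    have h4 : ‖w - y‖ = ‖y - w‖ := norm_sub_rev _ _
    rw [h4] at h1
    have h5 : t * ((F y + ℓ*‖y - z‖^2) - (F w + ℓ*‖w - z‖^2))
        ≥ ℓ/2*t*(1-t)*‖y - w‖^2 := by nlinarith [h1, h3]
    nlinarith [h5, sq_nonneg ‖y - w‖, mul_pos hℓ ht0]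
  have := nonneg_of_forall_add key
  linarith

end SGMAux

open SGMAux in
/-- Theorem 4.3: convergence of the projected stochastic subgradient method in the hidden
convex setting (`μ_H = 0`). -/
theorem sgm_convergence_hidden_convex {d : ℕ}
    {Ω : Type} [MeasurableSpace Ω] (μ : Measure Ω) [IsProbabilityMeasure μ]
    (X U : Set (EuclideanSpace ℝ (Fin d))) (hXne : X.Nonempty) (hXcl : IsClosed X) (hXcvx : Convex ℝ X)
    (F H : EuclideanSpace ℝ (Fin d) → ℝ) (c : EuclideanSpace ℝ (Fin d) → EuclideanSpace ℝ (Fin d)) (μc ℓ ρ η GF DU : ℝ)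
    (hμc : 0 < μc) (hℓ : 0 < ℓ) (ustar xstar : EuclideanSpace ℝ (Fin d))
    (hHC : HiddenConvex μc 0 X U c H F ustar)
    (hWC : WeaklyConvex ℓ F)
    (hxstar : xstar ∈ X) (hcxstar : c xstar = ustar)
    (hUbdd : Bornology.IsBounded U) (hDU : DU = Metric.diam U) (hDUpos : 0 < DU)
    (hρ : ρ = 2 * ℓ) (hη0 : 0 < η) (hη : η ≤ 1 / (2 * ℓ))
    (x g : ℕ → Ω → EuclideanSpace ℝ (Fin d)) (x0 : EuclideanSpace ℝ (Fin d)) (hx0X : x0 ∈ X) (hx0 : ∀ ω, x 0 ω = x0)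
    (hgmeas : ∀ t, Measurable (g t)) (hgL2 : ∀ t, MemLp (g t) 2 μ)
    (hadapt : ∀ t, @Measurable Ω (EuclideanSpace ℝ (Fin d)) (sgdFiltration g t) _ (x t))
    (hrec : ∀ t ω, IsProjection X (x t ω - η • g t ω) (x (t + 1) ω))
    (hcond : ∀ t, ∀ᵐ ω ∂μ, (μ[g t | sgdFiltration g t]) ω ∈ WCSubdiff ℓ F (x t ω))
    (hvar : ∀ t, ∀ᵐ ω ∂μ,
      (μ[(fun ω' => ‖g t ω'‖ ^ 2) | sgdFiltration g t]) ω ≤ GF ^ 2) :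
    ∀ α : ℝ, 0 < α → α ≤ η * ℓ → ∀ T : ℕ,
      (∫ ω, MoreauEnv X F ρ (x T ω) ∂μ) - F xstar ≤
        (1 - α) ^ T * ((∫ ω, MoreauEnv X F ρ (x 0 ω) ∂μ) - F xstar)
          + 3 * DU ^ 2 * α / (2 * μc ^ 2 * η) + 8 * ℓ * η ^ 2 * GF ^ 2 / α := by
  subst hρ
  subst hDU
  obtain ⟨hUcvx, hbij, hclb, hFH, hHcvx, hustarU, hustarmin⟩ := hHC
  intro α hα0 hαℓ T
  set DU : ℝ := Metric.diam U with hDU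
  -- basic positivity facts
  have hηℓ : η * ℓ ≤ 1/2 := by
    have h2ℓ : (0:ℝ) < 2*ℓ := by linarith
    calc η * ℓ ≤ (1/(2*ℓ)) * ℓ := mul_le_mul_of_nonneg_right hη hℓ.le
      _ = 1/2 := by field_simp
  have hα12 : α ≤ 1/2 := le_trans hαℓ hηℓ
  have h1α : (0:ℝ) ≤ 1 - α := by linarith
  set K : ℝ := DU / μc with hK
  have hKpos : 0 < K := div_pos hDUpos hμc
  -- distances
  have hUdist : ∀ u ∈ U, ∀ v ∈ U, ‖u - v‖ ≤ DU := by
    intro u hu v hv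
    rw [← dist_eq_norm]
    exact Metric.dist_le_diam_of_mem hUbdd hu hv
  have hXdist : ∀ a ∈ X, ∀ b ∈ X, ‖a - b‖ ≤ K := by
    intro a ha b hb
    have h1 := hclb a ha b hb
    have h2 := hUdist _ (hbij.mapsTo ha) _ (hbij.mapsTo hb)
    rw [hK, le_div_iff₀ hμc]
    nlinarith
  have hXbdd : Bornology.IsBounded X := by
    rw [Metric.isBounded_iff]
    exact ⟨K, fun a ha b hb => by rw [dist_eq_norm]; exact hXdist a ha b hb⟩
  have hXcp : IsCompact X := Metric.isCompact_of_isClosed_isBounded hXcl hXbdd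
  -- continuity of F
  have hFplus : Continuous fun z : EuclideanSpace ℝ (Fin d) => F z + ℓ/2*‖z‖^2 := by
    rw [← continuousOn_univ]
    exact hWC.continuousOn isOpen_univ
  have hFcont : Continuous F := by
    have hfe : F = fun z => (F z + ℓ/2*‖z‖^2) - ℓ/2*‖z‖^2 := by funext z; ring
    rw [hfe]
    exact hFplus.sub (continuous_const.mul (continuous_norm.pow 2))
  -- F xstar is the minimum of F over X
  have hFstar : ∀ y ∈ X, F xstar ≤ F y := by
    intro y hy
    rw [hFH xstar hxstar, hFH y hy, hcxstar]
    exact hustarmin _ (hbij.mapsTo hy)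
  -- proximal point
  have hψcont : ∀ z : EuclideanSpace ℝ (Fin d),
      Continuous fun y : EuclideanSpace ℝ (Fin d) => F y + ℓ*‖y - z‖^2 := fun z =>
    hFcont.add (continuous_const.mul (((continuous_id.sub continuous_const)).norm.pow 2))
  have hproxex : ∀ z : EuclideanSpace ℝ (Fin d), ∃ w, w ∈ X ∧
      ∀ y ∈ X, F w + ℓ*‖w - z‖^2 ≤ F y + ℓ*‖y - z‖^2 := by
    intro z
    obtain ⟨w, hw, hmin⟩ := hXcp.exists_isMinOn hXne (hψcont z).continuousOn
    exact ⟨w, hw, fun y hy => hmin hy⟩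
  choose prox hproxX hproxmin using hproxex
  -- Moreau envelope facts (with ρ = 2ℓ, ρ/2 = ℓ)
  have hMenv : ∀ z : EuclideanSpace ℝ (Fin d),
      MoreauEnv X F (2*ℓ) z = sInf ((fun y => F y + ℓ*‖y - z‖^2) '' X) := by
    intro z
    unfold MoreauEnv
    simp only [show (2*ℓ)/2 = ℓ by ring]
  have hbddb : ∀ z : EuclideanSpace ℝ (Fin d),
      BddBelow ((fun y => F y + ℓ*‖y - z‖^2) '' X) := by
    intro z
    refine ⟨F xstar, ?_⟩
    rintro b ⟨y, hy, rfl⟩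
    have h1 := hFstar y hy
    have h2 : 0 ≤ ℓ*‖y - z‖^2 := by positivity
    simp only []
    linarith
  have hPhi_le : ∀ z : EuclideanSpace ℝ (Fin d), ∀ y ∈ X,
      MoreauEnv X F (2*ℓ) z ≤ F y + ℓ*‖y - z‖^2 := by
    intro z y hy
    rw [hMenv z]
    exact csInf_le (hbddb z) ⟨y, hy, rfl⟩
  have hPhi_eq : ∀ z : EuclideanSpace ℝ (Fin d),
      MoreauEnv X F (2*ℓ) z = F (prox z) + ℓ*‖prox z - z‖^2 := by
    intro z
    refine le_antisymm (hPhi_le z _ (hproxX z)) ?_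
    rw [hMenv z]
    refine le_csInf (hXne.image _) ?_
    rintro b ⟨y, hy, rfl⟩
    exact hproxmin z y hy
  -- strong convexity at the proximal point
  have hsc : ∀ z : EuclideanSpace ℝ (Fin d), ∀ y ∈ X,
      F (prox z) + ℓ*‖prox z - z‖^2 + ℓ/2*‖y - prox z‖^2 ≤ F y + ℓ*‖y - z‖^2 :=
    fun z y hy => strong_min hℓ hWC hXcvx (hproxX z) (hproxmin z) hy
  -- prox is 2-Lipschitz
  have hproxlip : ∀ z w : EuclideanSpace ℝ (Fin d), ‖prox z - prox w‖ ≤ 2*‖z - w‖ := by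
    intro z w
    set a := prox z
    set b := prox w
    have h1 := hsc z b (hproxX w)
    have h2 := hsc w a (hproxX z)
    have hba : ‖b - a‖ = ‖a - b‖ := norm_sub_rev _ _
    rw [hba] at h1
    have hQ : ℓ*(‖a - z‖^2 + ‖b - w‖^2 + ‖a - b‖^2) ≤ ℓ*(‖b - z‖^2 + ‖a - w‖^2) := by
      nlinarith [h1, h2]
    have hQ' : ‖a - z‖^2 + ‖b - w‖^2 + ‖a - b‖^2 ≤ ‖b - z‖^2 + ‖a - w‖^2 :=
      le_of_mul_le_mul_left (by linarith) hℓ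
    have e1 : ‖a - z‖^2 = ‖a‖^2 - 2*⟪a,z⟫ + ‖z‖^2 := norm_sub_sq_real _ _
    have e2 : ‖b - w‖^2 = ‖b‖^2 - 2*⟪b,w⟫ + ‖w‖^2 := norm_sub_sq_real _ _
    have e3 : ‖b - z‖^2 = ‖b‖^2 - 2*⟪b,z⟫ + ‖z‖^2 := norm_sub_sq_real _ _
    have e4 : ‖a - w‖^2 = ‖a‖^2 - 2*⟪a,w⟫ + ‖w‖^2 := norm_sub_sq_real _ _
    have hinner : ⟪a - b, z - w⟫ = ⟪a,z⟫ - ⟪a,w⟫ - ⟪b,z⟫ + ⟪b,w⟫ := by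
      rw [inner_sub_left, inner_sub_right, inner_sub_right]
      ring
    have hkey : ‖a - b‖^2 ≤ 2*⟪a - b, z - w⟫ := by
      rw [hinner]; linarith
    have hub : ⟪a - b, z - w⟫ ≤ ‖a - b‖*‖z - w‖ := real_inner_le_norm _ _
    nlinarith [norm_nonneg (a - b), norm_nonneg (z - w)]
  have hproxcont : Continuous prox := by
    have : LipschitzWith 2 prox := by
      apply LipschitzWith.of_dist_le_mul
      intro a b
      rw [dist_eq_norm, dist_eq_norm]
      exact_mod_cast hproxlip a b
    exact this.continuous
  -- continuity of the Moreau envelope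
  have hPhicont : Continuous (MoreauEnv X F (2*ℓ)) := by
    have he : MoreauEnv X F (2*ℓ) = fun z => F (prox z) + ℓ*‖prox z - z‖^2 := funext hPhi_eq
    rw [he]
    exact (hFcont.comp hproxcont).add
      (continuous_const.mul (((hproxcont.sub continuous_id)).norm.pow 2))
  -- bounds on compact X
  obtain ⟨MP, hMP⟩ := hXcp.exists_bound_of_continuousOn hPhicont.continuousOn
  -- iterates stay in X
  have hxX : ∀ t (ω : Ω), x t ω ∈ X := by
    intro t
    induction t with
    | zero => intro ω; rw [hx0 ω]; exact hx0X
    | succ n _ => intro ω; exact (hrec n ω).1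
  -- filtration facts
  have hmle : ∀ t, sgdFiltration g t ≤ ‹MeasurableSpace Ω› := by
    intro t
    refine iSup_le fun i => iSup_le fun _ => ?_
    exact (hgmeas i).comap_le
  have hxmeas : ∀ t, Measurable (x t) := fun t => (hadapt t).mono (hmle t) le_rfl
  have hgint : ∀ t, Integrable (g t) μ := fun t => (hgL2 t).integrable (by norm_num)
  have hgsqint : ∀ t, Integrable (fun ω => ‖g t ω‖^2) μ := by
    intro t
    have h1 := (hgL2 t).integrable_norm_rpow (by norm_num) (by norm_num)
    refine h1.congr (Filter.Eventually.of_forall fun ω => ?_)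
    norm_num [Real.rpow_natCast]
  -- integrability of the envelope along the iterates
  have hintPhi : ∀ t, Integrable (fun ω => MoreauEnv X F (2*ℓ) (x t ω)) μ := by
    intro t
    refine Integrable.mono' (integrable_const MP)
      ((hPhicont.measurable.comp (hxmeas t)).aestronglyMeasurable)
      (Filter.Eventually.of_forall fun ω => ?_)
    exact hMP _ (hxX t ω)
  -- the deterministic one-step estimate
  set lam : ℝ := α/(2*ℓ*η) with hlam
  have hlampos : 0 < lam := by positivity
  have hlamle : lam ≤ 1/2 := by
    rw [hlam, div_le_iff₀ (by positivity)]
    nlinarith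
  have hdet : ∀ z ∈ X,
      2*ℓ*η*(F (prox z) - F z + ℓ/2*‖prox z - z‖^2)
        + α*(MoreauEnv X F (2*ℓ) z - F xstar) ≤ 3*DU^2*α^2/(2*μc^2*η) := by
    intro z hz
    set w := prox z with hwdef
    have hwX : w ∈ X := hproxX z
    set r : ℝ := ‖w - z‖ with hr
    have hr0 : 0 ≤ r := norm_nonneg _
    have e1 : MoreauEnv X F (2*ℓ) z = F w + ℓ*r^2 := hPhi_eq z
    have e2 : F w + ℓ*r^2 + ℓ/2*r^2 ≤ F z := by
      have h := hsc z z hz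
      have hz0 : ‖z - z‖ = 0 := by simp
      have hzw : ‖z - w‖ = r := by rw [hr, norm_sub_rev]
      rw [hz0, hzw] at h
      nlinarith [h]
    have hcwU : c w ∈ U := hbij.mapsTo hwX
    set ul : EuclideanSpace ℝ (Fin d) := (1-lam) • (c w) + lam • ustar with hul
    have hulU : ul ∈ U := hUcvx hcwU hustarU (by linarith) hlampos.le (by ring)
    obtain ⟨y, hyX, hcy⟩ := hbij.surjOn hulU
    have hFy : F y ≤ (1-lam)*F w + lam*F xstar := by
      have hH := hHcvx (c w) hcwU ustar hustarU lam ⟨hlampos.le, by linarith⟩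
      have h0 : (1 - lam) * lam * 0 / 2 * ‖c w - ustar‖ ^ 2 = 0 := by ring
      rw [h0] at hH
      rw [hFH y hyX, hcy, hFH w hwX, hFH xstar hxstar, hcxstar]
      rw [hul]
      linarith
    have hyw : ‖y - w‖ ≤ lam*K := by
      have h1 := hclb y hyX w hwX
      have h2 : c y - c w = lam • (ustar - c w) := by rw [hcy, hul]; module
      have h3 : ‖c y - c w‖ = lam*‖ustar - c w‖ := by
        rw [h2, norm_smul, Real.norm_eq_abs, abs_of_pos hlampos]
      have h4 : ‖ustar - c w‖ ≤ DU := hUdist _ hustarU _ hcwU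
      have h5 : μc*‖y - w‖ ≤ lam*DU := by nlinarith [h1, h3, h4, hlampos]
      rw [hK, ← mul_div_assoc, le_div_iff₀ hμc]
      nlinarith
    have hyz2 : ‖y - z‖^2 ≤ (lam*K + r)^2 := by
      have h1 : ‖y - z‖ ≤ lam*K + r := by
        have h2 : dist y z ≤ dist y w + dist w z := dist_triangle _ _ _
        rw [dist_eq_norm, dist_eq_norm, dist_eq_norm] at h2
        rw [← hr] at h2
        linarith [hyw]
      exact pow_le_pow_left₀ (norm_nonneg _) h1 2
    have hPhiy : MoreauEnv X F (2*ℓ) z ≤ F y + ℓ*‖y - z‖^2 := hPhi_le z y hyX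
    -- hidden convexity bound on F w - F xstar
    have hFw : F w - F xstar ≤ 2*ℓ*K*r + ℓ*(lam*K^2) := by
      have h1 : F w + ℓ*r^2 ≤ (1-lam)*F w + lam*F xstar + ℓ*(lam*K + r)^2 := by
        calc F w + ℓ*r^2 = MoreauEnv X F (2*ℓ) z := e1.symm
          _ ≤ F y + ℓ*‖y - z‖^2 := hPhiy
          _ ≤ (1-lam)*F w + lam*F xstar + ℓ*(lam*K + r)^2 := by nlinarith [hFy, hyz2]
      have h2 : lam*(F w - F xstar) ≤ lam*(2*ℓ*K*r + ℓ*(lam*K^2)) := by nlinarith [h1]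
      exact le_of_mul_le_mul_left h2 hlampos
    -- assemble, clearing denominators
    have hCD : 3*DU^2*α^2/(2*μc^2*η) = 3*α^2*K^2/(2*η) := by
      rw [hK]
      field_simp
    rw [e1, hCD, le_div_iff₀ (by positivity : (0:ℝ) < 2*η)]
    have hFw' : η*(F w - F xstar) ≤ 2*ℓ*K*r*η + α*K^2/2 := by
      have h1 : η*(ℓ*(lam*K^2)) = α*K^2/2 := by
        rw [hlam]
        field_simp
      nlinarith [hFw, hη0]
    have e2' : F w - F z + (3/2)*ℓ*r^2 ≤ 0 := by linarith [e2]
    have c1 : 4*ℓ*η^2*(F w - F z + (3/2)*ℓ*r^2) ≤ 0 := by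
      have := mul_le_mul_of_nonneg_left e2' (show (0:ℝ) ≤ 4*ℓ*η^2 by positivity)
      linarith
    have hFw'' : η*(F w - F xstar) - (2*ℓ*K*r*η + α*K^2/2) ≤ 0 := by linarith [hFw']
    have c2 : 2*α*(η*(F w - F xstar) - (2*ℓ*K*r*η + α*K^2/2)) ≤ 0 := by
      have := mul_le_mul_of_nonneg_left hFw'' (show (0:ℝ) ≤ 2*α by linarith)
      linarith
    have c3 : (0:ℝ) ≤ 2*(ℓ*η*r - α*K)^2 := by positivity
    have c4 : (0:ℝ) ≤ 2*ℓ*η*r^2*(ℓ*η - α) := by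
      have : 0 ≤ ℓ*η - α := by nlinarith [hαℓ]
      positivity
    nlinarith [c1, c2, c3, c4]
  -- the one-step expectation inequality
  set CD : ℝ := 3*DU^2*α^2/(2*μc^2*η) with hCDdef
  have hstep : ∀ t : ℕ,
      (∫ ω, MoreauEnv X F (2*ℓ) (x (t+1) ω) ∂μ) - F xstar ≤
        (1-α) * ((∫ ω, MoreauEnv X F (2*ℓ) (x t ω) ∂μ) - F xstar) + CD + ℓ*η^2*GF^2 := by
    intro t
    have hmt := hmle t
    haveI : SigmaFinite (μ.trim hmt) := by infer_instance
    set v : Ω → EuclideanSpace ℝ (Fin d) := fun ω => prox (x t ω) - x t ω with hvdef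
    have hvmeas : Measurable v := (hproxcont.measurable.comp (hxmeas t)).sub (hxmeas t)
    have hvm : Measurable[sgdFiltration g t] v :=
      (hproxcont.measurable.comp (hadapt t)).sub (hadapt t)
    have hvbd : ∀ ω, ‖v ω‖ ≤ K := fun ω => hXdist _ (hproxX _) _ (hxX t ω)
    -- pointwise inequality
    have hpt : ∀ ω, MoreauEnv X F (2*ℓ) (x (t+1) ω) ≤
        MoreauEnv X F (2*ℓ) (x t ω) + 2*ℓ*η*⟪g t ω, v ω⟫ + ℓ*η^2*‖g t ω‖^2 := by
      intro ω
      have h1 : MoreauEnv X F (2*ℓ) (x (t+1) ω) ≤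
          F (prox (x t ω)) + ℓ*‖prox (x t ω) - x (t+1) ω‖^2 := by
        have := hPhi_le (x (t+1) ω) (prox (x t ω)) (hproxX _)
        linarith [this]
      have h2 : ‖prox (x t ω) - x (t+1) ω‖ ≤ ‖prox (x t ω) - (x t ω - η • g t ω)‖ :=
        isProjection_dist_le hXcvx (hrec t ω) (hproxX _)
      have h2sq := pow_le_pow_left₀ (norm_nonneg _) h2 2
      have h3 : ‖prox (x t ω) - (x t ω - η • g t ω)‖^2
          = ‖v ω‖^2 + 2*η*⟪g t ω, v ω⟫ + η^2*‖g t ω‖^2 := by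
        have e : prox (x t ω) - (x t ω - η • g t ω) = v ω + η • g t ω := by
          simp only [hvdef]; abel
        rw [e, norm_add_sq_real, real_inner_smul_right, norm_smul, Real.norm_eq_abs, mul_pow,
          sq_abs, real_inner_comm]
        ring
      have h4 : MoreauEnv X F (2*ℓ) (x t ω) = F (prox (x t ω)) + ℓ*‖v ω‖^2 := by
        simp only [hvdef]
        exact hPhi_eq _
      have h5 := mul_le_mul_of_nonneg_left h2sq hℓ.le
      rw [h3] at h5
      nlinarith [h1, h5, h4]
    -- integrability of the inner products
    have hintIP : Integrable (fun ω => ⟪g t ω, v ω⟫) μ := by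
      refine Integrable.mono' ((hgint t).norm.const_mul K)
        ((hgmeas t).inner hvmeas).aestronglyMeasurable
        (Filter.Eventually.of_forall fun ω => ?_)
      have h1 : |⟪g t ω, v ω⟫| ≤ ‖g t ω‖*‖v ω‖ := abs_real_inner_le_norm _ _
      have h2 : ‖g t ω‖*‖v ω‖ ≤ K*‖g t ω‖ := by nlinarith [hvbd ω, norm_nonneg (g t ω)]
      rw [Real.norm_eq_abs]
      linarith
    have hgbarint : Integrable (μ[g t|sgdFiltration g t]) μ := integrable_condExp
    have hgbarsm : AEStronglyMeasurable (μ[g t|sgdFiltration g t]) μ :=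
      (stronglyMeasurable_condExp.mono hmt).aestronglyMeasurable
    have hintIPb : Integrable (fun ω => ⟪(μ[g t|sgdFiltration g t]) ω, v ω⟫) μ := by
      refine Integrable.mono' (hgbarint.norm.const_mul K)
        (hgbarsm.inner hvmeas.aestronglyMeasurable)
        (Filter.Eventually.of_forall fun ω => ?_)
      have h1 : |⟪(μ[g t|sgdFiltration g t]) ω, v ω⟫| ≤ ‖(μ[g t|sgdFiltration g t]) ω‖*‖v ω‖ :=
        abs_real_inner_le_norm _ _
      have h2 : ‖(μ[g t|sgdFiltration g t]) ω‖*‖v ω‖ ≤ K*‖(μ[g t|sgdFiltration g t]) ω‖ := by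
        nlinarith [hvbd ω, norm_nonneg ((μ[g t|sgdFiltration g t]) ω)]
      rw [Real.norm_eq_abs]
      linarith
    -- tower property: E⟪g, v⟫ = E⟪E[g|𝔉], v⟫
    have hexpand : ∀ (f : Ω → EuclideanSpace ℝ (Fin d)) (ω : Ω),
        ⟪f ω, v ω⟫ = ∑ i, v ω i * f ω i := by
      intro f ω
      rw [PiLp.inner_apply]
      refine Finset.sum_congr rfl fun i _ => ?_
      rw [RCLike.inner_apply, conj_trivial, mul_comm]
    have hvcoordsm : ∀ i, AEStronglyMeasurable (fun ω => v ω i) μ :=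
      fun i => (show Measurable (fun ω => v ω i) from (measurable_pi_apply i).comp (Measurable.comp (WithLp.measurable_ofLp 2 (Fin d → ℝ)) hvmeas)).aestronglyMeasurable
    have hvcoordbd : ∀ i (ω : Ω), ‖v ω i‖ ≤ K := by
      intro i ω
      rw [Real.norm_eq_abs]
      exact le_trans (coord_abs_le_norm (v ω) i) (hvbd ω)
    have hcoordint : ∀ i, Integrable (fun ω => v ω i * g t ω i) μ := by
      intro i
      exact (integrable_euclid_coord (hgint t) i).bdd_mul (hvcoordsm i) (Filter.Eventually.of_forall (hvcoordbd i))
    have hcoordint' : ∀ i, Integrable (fun ω => v ω i * (μ[g t|sgdFiltration g t]) ω i) μ := by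
      intro i
      exact (integrable_euclid_coord hgbarint i).bdd_mul (hvcoordsm i) (Filter.Eventually.of_forall (hvcoordbd i))
    have htower : ∫ ω, ⟪g t ω, v ω⟫ ∂μ
        = ∫ ω, ⟪(μ[g t|sgdFiltration g t]) ω, v ω⟫ ∂μ := by
      have hLf : (fun ω => ⟪g t ω, v ω⟫) = fun ω => ∑ i, v ω i * g t ω i :=
        funext (hexpand (g t))
      have hRf : (fun ω => ⟪(μ[g t|sgdFiltration g t]) ω, v ω⟫)
          = fun ω => ∑ i, v ω i * (μ[g t|sgdFiltration g t]) ω i :=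
        funext (hexpand _)
      rw [hLf, hRf, integral_finset_sum _ (fun i _ => hcoordint i),
        integral_finset_sum _ (fun i _ => hcoordint' i)]
      refine Finset.sum_congr rfl fun i _ => ?_
      have hvim : StronglyMeasurable[sgdFiltration g t] (fun ω => v ω i) :=
        stronglyMeasurable_euclid_coord hvm.stronglyMeasurable i
      have hgiint : Integrable (fun ω => g t ω i) μ := integrable_euclid_coord (hgint t) i
      have hpull : μ[(fun ω => v ω i) * (fun ω => g t ω i)|sgdFiltration g t]
          =ᵐ[μ] (fun ω => v ω i) * μ[(fun ω => g t ω i)|sgdFiltration g t] :=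
        condExp_mul_of_stronglyMeasurable_left hvim (hcoordint i) hgiint
      calc ∫ ω, v ω i * g t ω i ∂μ
          = ∫ ω, (μ[(fun ω => v ω i) * (fun ω => g t ω i)|sgdFiltration g t]) ω ∂μ :=
            (integral_condExp hmt).symm
        _ = ∫ ω, ((fun ω => v ω i) * μ[(fun ω => g t ω i)|sgdFiltration g t]) ω ∂μ :=
            integral_congr_ae hpull
        _ = ∫ ω, v ω i * (μ[g t|sgdFiltration g t]) ω i ∂μ := by
            refine integral_congr_ae ?_
            filter_upwards [condexp_euclid_coord hmt (hgint t) i] with ω hω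
            simp only [Pi.mul_apply]
            rw [← hω]
    -- a.e. bound on the conditional-expectation inner product
    have hae3 : ∀ᵐ ω ∂μ, 2*ℓ*η*⟪(μ[g t|sgdFiltration g t]) ω, v ω⟫ ≤
        -α*(MoreauEnv X F (2*ℓ) (x t ω) - F xstar) + CD := by
      filter_upwards [hcond t] with ω hω
      have hsub := hω (prox (x t ω))
      have hd := hdet (x t ω) (hxX t ω)
      have h1 : ⟪(μ[g t|sgdFiltration g t]) ω, v ω⟫
          ≤ F (prox (x t ω)) - F (x t ω) + ℓ/2*‖v ω‖^2 := by
        simp only [hvdef]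
        linarith [hsub]
      have h2 := mul_le_mul_of_nonneg_left h1 (show (0:ℝ) ≤ 2*ℓ*η by positivity)
      have h3 : ℓ/2*‖v ω‖^2 = ℓ/2*‖prox (x t ω) - x t ω‖^2 := by simp only [hvdef]
      rw [hCDdef]
      nlinarith [h2, hd, h3]
    -- integrate the bound
    have hIP2 : 2*ℓ*η*(∫ ω, ⟪(μ[g t|sgdFiltration g t]) ω, v ω⟫ ∂μ)
        ≤ -α*((∫ ω, MoreauEnv X F (2*ℓ) (x t ω) ∂μ) - F xstar) + CD := by
      have hi0 : Integrable (fun ω => MoreauEnv X F (2*ℓ) (x t ω) - F xstar) μ := by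
        exact (hintPhi t).sub (integrable_const (F xstar))
      have hi1 : Integrable (fun ω => -α * (MoreauEnv X F (2*ℓ) (x t ω) - F xstar)) μ := by
        exact hi0.const_mul (-α)
      have hi2 : Integrable (fun ω => -α * (MoreauEnv X F (2*ℓ) (x t ω) - F xstar) + CD) μ := by
        exact hi1.add (integrable_const CD)
      have hiL : Integrable (fun ω => 2*ℓ*η*⟪(μ[g t|sgdFiltration g t]) ω, v ω⟫) μ := by
        exact hintIPb.const_mul (2*ℓ*η)
      have h5 := integral_mono_ae (f := fun ω => 2*ℓ*η*⟪(μ[g t|sgdFiltration g t]) ω, v ω⟫)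
        (g := fun ω => -α * (MoreauEnv X F (2*ℓ) (x t ω) - F xstar) + CD) hiL hi2 hae3
      have hRI : ∫ ω, (-α * (MoreauEnv X F (2*ℓ) (x t ω) - F xstar) + CD) ∂μ
          = -α*((∫ ω, MoreauEnv X F (2*ℓ) (x t ω) ∂μ) - F xstar) + CD := by
        rw [integral_add hi1 (integrable_const CD), integral_const_mul,
          integral_sub (hintPhi t) (integrable_const (F xstar))]
        simp [measure_univ]
      have hLI : ∫ ω, (2*ℓ*η*⟪(μ[g t|sgdFiltration g t]) ω, v ω⟫) ∂μ
          = 2*ℓ*η*(∫ ω, ⟪(μ[g t|sgdFiltration g t]) ω, v ω⟫ ∂μ) := integral_const_mul _ _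
      rw [hRI, hLI] at h5
      linarith [h5]
    -- second moment bound
    have hGF : ∫ ω, ‖g t ω‖^2 ∂μ ≤ GF^2 := by
      have h1 := integral_mono_ae (μ := μ)
        (f := fun ω => (μ[(fun ω' => ‖g t ω'‖ ^ 2)|sgdFiltration g t]) ω)
        (g := fun _ => GF^2) integrable_condExp (integrable_const (GF^2)) (hvar t)
      rw [integral_condExp hmt] at h1
      simpa [integral_const, measure_univ] using h1
    -- combine everything
    have hj1 : Integrable (fun ω => 2*ℓ*η*⟪g t ω, v ω⟫) μ := by
      exact hintIP.const_mul (2*ℓ*η)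
    have hj2 : Integrable (fun ω => ℓ*η^2*‖g t ω‖^2) μ := by
      exact (hgsqint t).const_mul (ℓ*η^2)
    have hj3 : Integrable (fun ω => MoreauEnv X F (2*ℓ) (x t ω) + 2*ℓ*η*⟪g t ω, v ω⟫) μ := by
      exact (hintPhi t).add hj1
    have hj4 : Integrable
        (fun ω => MoreauEnv X F (2*ℓ) (x t ω) + 2*ℓ*η*⟪g t ω, v ω⟫ + ℓ*η^2*‖g t ω‖^2) μ := by
      exact hj3.add hj2
    have hA := integral_mono (μ := μ) (f := fun ω => MoreauEnv X F (2*ℓ) (x (t+1) ω))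
      (g := fun ω => MoreauEnv X F (2*ℓ) (x t ω) + 2*ℓ*η*⟪g t ω, v ω⟫ + ℓ*η^2*‖g t ω‖^2)
      (hintPhi (t+1)) hj4 hpt
    have hsplit : ∫ ω, (MoreauEnv X F (2*ℓ) (x t ω) + 2*ℓ*η*⟪g t ω, v ω⟫
          + ℓ*η^2*‖g t ω‖^2) ∂μ
        = (∫ ω, MoreauEnv X F (2*ℓ) (x t ω) ∂μ) + 2*ℓ*η*(∫ ω, ⟪g t ω, v ω⟫ ∂μ)
          + ℓ*η^2*(∫ ω, ‖g t ω‖^2 ∂μ) := by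
      rw [integral_add hj3 hj2, integral_add (hintPhi t) hj1, integral_const_mul,
        integral_const_mul]
    rw [hsplit] at hA
    have hG2 : ℓ*η^2*(∫ ω, ‖g t ω‖^2 ∂μ) ≤ ℓ*η^2*GF^2 :=
      mul_le_mul_of_nonneg_left hGF (by positivity)
    rw [htower] at hA
    linarith [hA, hIP2, hG2]
  -- induction
  have hiter : ∀ S : ℕ, (∫ ω, MoreauEnv X F (2*ℓ) (x S ω) ∂μ) - F xstar ≤
      (1-α)^S * ((∫ ω, MoreauEnv X F (2*ℓ) (x 0 ω) ∂μ) - F xstar)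
        + (CD + ℓ*η^2*GF^2) * ∑ i ∈ Finset.range S, (1-α)^i := by
    intro S
    induction S with
    | zero => simp
    | succ n ih =>
      have h1 := hstep n
      have h2 := mul_le_mul_of_nonneg_left ih h1α
      have h3 : (1-α) * ((1-α)^n * ((∫ ω, MoreauEnv X F (2*ℓ) (x 0 ω) ∂μ) - F xstar))
          = (1-α)^(n+1) * ((∫ ω, MoreauEnv X F (2*ℓ) (x 0 ω) ∂μ) - F xstar) := by ring
      have h4 : ∑ i ∈ Finset.range (n+1), (1-α)^i
          = (1-α) * ∑ i ∈ Finset.range n, (1-α)^i + 1 := geom_sum_succ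
      calc (∫ ω, MoreauEnv X F (2*ℓ) (x (n+1) ω) ∂μ) - F xstar
          ≤ (1-α) * ((∫ ω, MoreauEnv X F (2*ℓ) (x n ω) ∂μ) - F xstar) + CD + ℓ*η^2*GF^2 := h1
        _ ≤ (1-α) * ((1-α)^n * ((∫ ω, MoreauEnv X F (2*ℓ) (x 0 ω) ∂μ) - F xstar)
              + (CD + ℓ*η^2*GF^2) * ∑ i ∈ Finset.range n, (1-α)^i) + CD + ℓ*η^2*GF^2 := by
            linarith [h2]
        _ = (1-α)^(n+1) * ((∫ ω, MoreauEnv X F (2*ℓ) (x 0 ω) ∂μ) - F xstar)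
              + (CD + ℓ*η^2*GF^2) * ((1-α) * ∑ i ∈ Finset.range n, (1-α)^i + 1) := by ring
        _ = (1-α)^(n+1) * ((∫ ω, MoreauEnv X F (2*ℓ) (x 0 ω) ∂μ) - F xstar)
              + (CD + ℓ*η^2*GF^2) * ∑ i ∈ Finset.range (n+1), (1-α)^i := by rw [h4]
  -- conclusion
  have hsum : ∑ i ∈ Finset.range T, (1-α)^i ≤ 1/α := by
    have hne : (1:ℝ) - α ≠ 1 := by intro h; nlinarith
    rw [geom_sum_eq hne]
    have h1 : ((1-α)^T - 1)/((1-α) - 1) = (1 - (1-α)^T)/α := by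
      rw [div_eq_div_iff (by linarith) (by linarith)]
      ring
    rw [h1]
    have h2 : (0:ℝ) ≤ (1-α)^T := pow_nonneg h1α T
    rw [div_le_div_iff₀ hα0 hα0]
    nlinarith [mul_nonneg h2 hα0.le]
  have hCpos : 0 ≤ CD + ℓ*η^2*GF^2 := by
    rw [hCDdef]
    positivity
  have hfin := hiter T
  have h6 : (CD + ℓ*η^2*GF^2) * ∑ i ∈ Finset.range T, (1-α)^i ≤ (CD + ℓ*η^2*GF^2) * (1/α) :=
    mul_le_mul_of_nonneg_left hsum hCpos
  have h7 : (CD + ℓ*η^2*GF^2) * (1/α) ≤ 3*DU^2*α/(2*μc^2*η) + 8*ℓ*η^2*GF^2/α := by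
    have e1 : CD * (1/α) = 3*DU^2*α/(2*μc^2*η) := by
      rw [hCDdef]
      field_simp
    have e2 : (ℓ*η^2*GF^2) * (1/α) ≤ 8*ℓ*η^2*GF^2/α := by
      rw [div_eq_mul_one_div (8*ℓ*η^2*GF^2) α]
      refine mul_le_mul_of_nonneg_right ?_ (by positivity)
      nlinarith [sq_nonneg GF, sq_nonneg η, hℓ.le, mul_nonneg (sq_nonneg η) (sq_nonneg GF),
        mul_nonneg hℓ.le (mul_nonneg (sq_nonneg η) (sq_nonneg GF))]
    nlinarith [e1, e2]
  linarith [hfin, h6, h7]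
end
end

section
/- Let F : ℝ^d → ℝ be ℓ-weakly convex with ℓ > 0 and (μ_c, μ_H)-hidden strongly convex on X with μ_H > 0, and let x* ∈ X be the (unique) minimizer of F over X. Let x be a square-integrable random vector taking values in X, let x̂ := prox_{Φ/2ℓ}(x) with Φ := F + δ_X, and suppose that for some ε ≥ 0, E[F(x̂) − F(x*) + ℓ‖x̂ − x‖²] ≤ ε. Then E‖x − x*‖² ≤ (4/(μ_H μ_c²) + 2/ℓ) ε. -/
open MeasureTheory
open scoped RealInnerProductSpace

noncomputable section

lemma aux_le_of_forall_mul {a b : ℝ} (hb : 0 ≤ b) (h : ∀ t : ℝ, 0 ≤ t → t < 1 → t * b ≤ a) :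
    b ≤ a := by
  have ha : 0 ≤ a := by simpa using h 0 le_rfl one_pos
  rcases eq_or_lt_of_le hb with hb0 | hb0
  · linarith
  · by_contra hab
    push_neg at hab
    have h1 : a / b < 1 := (div_lt_one hb0).2 hab
    have h2 : 0 ≤ a / b := div_nonneg ha hb0.le
    set t := (a / b + 1) / 2 with ht
    have h3 := h t (by linarith) (by linarith)
    have h4 : a / b < t := by rw [ht]; linarith
    have h5 : a / b * b < t * b := mul_lt_mul_of_pos_right h4 hb0
    rw [div_mul_cancel₀ _ hb0.ne'] at h5
    linarith

lemma norm_combo_sq {d : ℕ} (a b : EuclideanSpace ℝ (Fin d)) (s t : ℝ) (hst : s + t = 1) :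
    ‖s • a + t • b‖ ^ 2 = s * ‖a‖ ^ 2 + t * ‖b‖ ^ 2 - s * t * ‖a - b‖ ^ 2 := by
  have hs : s = 1 - t := by linarith
  subst hs
  rw [← real_inner_self_eq_norm_sq ((1-t) • a + t • b), ← real_inner_self_eq_norm_sq a,
    ← real_inner_self_eq_norm_sq b, ← real_inner_self_eq_norm_sq (a - b)]
  simp only [inner_add_left, inner_add_right, inner_sub_left, inner_sub_right,
    real_inner_smul_left, real_inner_smul_right]
  rw [real_inner_comm b a]
  ring


set_option maxHeartbeats 1000000 in
/-- Corollary 4.6: under hidden strong convexity, closeness of the Moreau-envelope gap to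
zero yields convergence of the iterate to the unique minimizer. -/
theorem sgm_iterate_convergence {d : ℕ}
    {Ω : Type} [MeasurableSpace Ω] (μ : Measure Ω) [IsProbabilityMeasure μ]
    (X U : Set (EuclideanSpace ℝ (Fin d))) (hXne : X.Nonempty) (hXcl : IsClosed X) (hXcvx : Convex ℝ X)
    (F H : EuclideanSpace ℝ (Fin d) → ℝ) (c : EuclideanSpace ℝ (Fin d) → EuclideanSpace ℝ (Fin d)) (μc μH ℓ : ℝ)
    (hμc : 0 < μc) (hμH : 0 < μH) (hℓ : 0 < ℓ) (ustar xstar : EuclideanSpace ℝ (Fin d))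
    (hHC : HiddenConvex μc μH X U c H F ustar)
    (hWC : WeaklyConvex ℓ F)
    (hxstar : xstar ∈ X) (hcxstar : c xstar = ustar)
    (x xhat : Ω → EuclideanSpace ℝ (Fin d)) (hxX : ∀ ω, x ω ∈ X) (hx2 : MemLp x 2 μ)
    (hprox : ∀ ω, IsProx X F (2 * ℓ) (x ω) (xhat ω))
    (ε : ℝ) (hε : 0 ≤ ε)
    (hgap : (∫ ω, (F (xhat ω) - F xstar + ℓ * ‖xhat ω - x ω‖ ^ 2) ∂μ) ≤ ε) :
    (∫ ω, ‖x ω - xstar‖ ^ 2 ∂μ) ≤ (4 / (μH * μc ^ 2) + 2 / ℓ) * ε := by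
  obtain ⟨hUcvx, hbij, hc, hFH, hHcvx, hustarU, hmin⟩ := hHC
  have hco : (2 * ℓ / 2 : ℝ) = ℓ := by ring
  -- F is minimized at xstar over X
  have hFmin : ∀ y ∈ X, F xstar ≤ F y := by
    intro y hy
    rw [hFH y hy, hFH xstar hxstar, hcxstar]
    exact hmin _ (hbij.mapsTo hy)
  -- quadratic growth of H at ustar
  have hHgrow : ∀ u ∈ U, μH / 2 * ‖u - ustar‖ ^ 2 ≤ H u - H ustar := by
    intro u hu
    apply aux_le_of_forall_mul (by positivity)
    intro t ht0 ht1
    have hmem : (1 - t) • u + t • ustar ∈ U := hUcvx hu hustarU (by linarith) ht0 (by ring)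
    have h2 := hHcvx u hu ustar hustarU t ⟨ht0, ht1.le⟩
    have h3 := hmin _ hmem
    have h1t : (0:ℝ) < 1 - t := by linarith
    have h4 : t * (μH / 2 * ‖u - ustar‖ ^ 2) * (1 - t) ≤ (H u - H ustar) * (1 - t) := by
      nlinarith
    exact le_of_mul_le_mul_right h4 h1t
  -- quadratic growth of F at xstar
  have hFgrow : ∀ y ∈ X, μH / 2 * μc ^ 2 * ‖y - xstar‖ ^ 2 ≤ F y - F xstar := by
    intro y hy
    have h1 := hHgrow (c y) (hbij.mapsTo hy)
    have h2 := hc y hy xstar hxstar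
    rw [hcxstar] at h2
    rw [hFH y hy, hFH xstar hxstar, hcxstar]
    have h3 : (μc * ‖y - xstar‖) ^ 2 ≤ ‖c y - ustar‖ ^ 2 := by
      have := mul_nonneg hμc.le (norm_nonneg (y - xstar))
      nlinarith
    nlinarith
  set C : ℝ := 4 / (μH * μc ^ 2) + 2 / ℓ with hC
  have hA : (0:ℝ) < μH * μc ^ 2 := by positivity
  have hCpos : 0 < C := by positivity
  -- pointwise key inequality
  have hkey : ∀ ω, ‖x ω - xstar‖ ^ 2 ≤
      C * (F (xhat ω) - F xstar + ℓ * ‖xhat ω - x ω‖ ^ 2) := by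
    intro ω
    have h1 : μH / 2 * μc ^ 2 * ‖xhat ω - xstar‖ ^ 2 ≤ F (xhat ω) - F xstar :=
      hFgrow _ (hprox ω).1
    have h2 : ‖x ω - xstar‖ ^ 2 ≤ 2 * ‖x ω - xhat ω‖ ^ 2 + 2 * ‖xhat ω - xstar‖ ^ 2 := by
      have h3 : x ω - xstar = (x ω - xhat ω) + (xhat ω - xstar) := by abel
      rw [h3]
      have h4 := norm_add_le (x ω - xhat ω) (xhat ω - xstar)
      have h4' : ‖x ω - xhat ω + (xhat ω - xstar)‖ ^ 2 ≤
          (‖x ω - xhat ω‖ + ‖xhat ω - xstar‖) ^ 2 :=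
        pow_le_pow_left₀ (norm_nonneg _) h4 2
      nlinarith [sq_nonneg (‖x ω - xhat ω‖ - ‖xhat ω - xstar‖)]
    have h5 : ‖x ω - xhat ω‖ = ‖xhat ω - x ω‖ := norm_sub_rev _ _
    rw [h5] at h2
    have h6 : 2 * ‖xhat ω - xstar‖ ^ 2 ≤ 4 / (μH * μc ^ 2) * (F (xhat ω) - F xstar) := by
      have he : 4 / (μH * μc ^ 2) * (F (xhat ω) - F xstar) - 2 * ‖xhat ω - xstar‖ ^ 2 =
          4 / (μH * μc ^ 2) *
            ((F (xhat ω) - F xstar) - μH / 2 * μc ^ 2 * ‖xhat ω - xstar‖ ^ 2) := by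
        field_simp
        ring
      have hp : 0 ≤ 4 / (μH * μc ^ 2) *
          ((F (xhat ω) - F xstar) - μH / 2 * μc ^ 2 * ‖xhat ω - xstar‖ ^ 2) :=
        mul_nonneg (by positivity) (by linarith)
      linarith
    have hg1 : 0 ≤ F (xhat ω) - F xstar := sub_nonneg.2 (hFmin _ (hprox ω).1)
    have hg2 : 0 ≤ ℓ * ‖xhat ω - x ω‖ ^ 2 := by positivity
    have h7 : 2 * ‖xhat ω - x ω‖ ^ 2 = 2 / ℓ * (ℓ * ‖xhat ω - x ω‖ ^ 2) := by
      field_simp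
    have h8 : 0 ≤ 4 / (μH * μc ^ 2) := by positivity
    have h9 : 0 ≤ 2 / ℓ := by positivity
    calc ‖x ω - xstar‖ ^ 2 ≤ 2 * ‖xhat ω - x ω‖ ^ 2 + 2 * ‖xhat ω - xstar‖ ^ 2 := h2
      _ ≤ 2 / ℓ * (ℓ * ‖xhat ω - x ω‖ ^ 2) + 4 / (μH * μc ^ 2) * (F (xhat ω) - F xstar) := by
          rw [← h7]; linarith
      _ ≤ C * (F (xhat ω) - F xstar + ℓ * ‖xhat ω - x ω‖ ^ 2) := by
          rw [hC]; nlinarith [mul_nonneg h8 hg2, mul_nonneg h9 hg1]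
  -- Moreau envelope
  set M : EuclideanSpace ℝ (Fin d) → ℝ :=
    fun p => sInf ((fun y => F y + ℓ * ‖y - p‖ ^ 2) '' X) with hM
  have hlb : ∀ p : EuclideanSpace ℝ (Fin d),
      F xstar ∈ lowerBounds ((fun y => F y + ℓ * ‖y - p‖ ^ 2) '' X) := by
    rintro p z ⟨y, hy, rfl⟩
    have h1 := hFmin y hy
    show F xstar ≤ F y + ℓ * ‖y - p‖ ^ 2
    have h2 : 0 ≤ ℓ * ‖y - p‖ ^ 2 := by positivity
    linarith
  have hMle : ∀ (p : EuclideanSpace ℝ (Fin d)), ∀ y ∈ X, M p ≤ F y + ℓ * ‖y - p‖ ^ 2 := by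
    intro p y hy
    exact csInf_le ⟨F xstar, hlb p⟩ ⟨y, hy, rfl⟩
  have hMeq : ∀ ω, M (x ω) = F (xhat ω) + ℓ * ‖xhat ω - x ω‖ ^ 2 := by
    intro ω
    rw [hM]
    apply IsLeast.csInf_eq
    constructor
    · exact ⟨xhat ω, (hprox ω).1, rfl⟩
    · rintro z ⟨y, hy, rfl⟩
      have h := (hprox ω).2 y hy
      rw [hco] at h
      exact h
  -- concavity of shifted envelope
  have hN : ConcaveOn ℝ Set.univ (fun p => M p - ℓ * ‖p‖ ^ 2) := by
    refine ⟨convex_univ, ?_⟩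
    intro p _ q _ s t hs ht hst
    simp only [smul_eq_mul]
    have hkey2 : s * M p + t * M q - ℓ * s * t * ‖p - q‖ ^ 2 ≤ M (s • p + t • q) := by
      rw [hM]
      apply le_csInf (Set.Nonempty.image _ ⟨xstar, hxstar⟩)
      rintro z ⟨y, hy, rfl⟩
      have hsplit : y - (s • p + t • q) = s • (y - p) + t • (y - q) := by
        have h0 : s • (y - p) + t • (y - q) = (s + t) • y - (s • p + t • q) := by
          rw [add_smul, smul_sub, smul_sub]; abel
        rw [h0, hst, one_smul]
      have hab : (y - p) - (y - q) = q - p := by abel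
      have hid : ‖y - (s • p + t • q)‖ ^ 2 =
          s * ‖y - p‖ ^ 2 + t * ‖y - q‖ ^ 2 - s * t * ‖p - q‖ ^ 2 := by
        rw [hsplit, norm_combo_sq (y - p) (y - q) s t hst, hab, norm_sub_rev q p]
      have h1 := hMle p y hy
      have h2 := hMle q y hy
      show s * M p + t * M q - ℓ * s * t * ‖p - q‖ ^ 2 ≤ F y + ℓ * ‖y - (s • p + t • q)‖ ^ 2
      have h3 := mul_le_mul_of_nonneg_left h1 hs
      have h4 := mul_le_mul_of_nonneg_left h2 ht
      rw [hid]
      have hFy : s * F y + t * F y = F y := by rw [← add_mul, hst, one_mul]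
      linarith [h3, h4]
    have hid2 : ‖s • p + t • q‖ ^ 2 = s * ‖p‖ ^ 2 + t * ‖q‖ ^ 2 - s * t * ‖p - q‖ ^ 2 :=
      norm_combo_sq p q s t hst
    have expand : M (s • p + t • q) - ℓ * ‖s • p + t • q‖ ^ 2 =
        M (s • p + t • q) - ℓ * (s * ‖p‖ ^ 2) - ℓ * (t * ‖q‖ ^ 2)
          + ℓ * (s * t * ‖p - q‖ ^ 2) := by
      rw [hid2]; ring
    rw [expand]
    linarith [hkey2]
  have hMcont : Continuous M := by
    have h1 : ContinuousOn (fun p => M p - ℓ * ‖p‖ ^ 2) Set.univ :=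
      hN.continuousOn isOpen_univ
    have h2 : Continuous (fun p => M p - ℓ * ‖p‖ ^ 2) :=
      continuousOn_univ.1 h1
    have h3 : Continuous fun p : EuclideanSpace ℝ (Fin d) => ℓ * ‖p‖ ^ 2 := by
      continuity
    have : M = fun p => (M p - ℓ * ‖p‖ ^ 2) + ℓ * ‖p‖ ^ 2 := by funext p; ring
    rw [this]
    exact h2.add h3
  -- integrability of the gap integrand
  have hgfun : (fun ω => F (xhat ω) - F xstar + ℓ * ‖xhat ω - x ω‖ ^ 2) =
      fun ω => M (x ω) - F xstar := by
    funext ω; rw [hMeq ω]; ring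
  have hxs2 : Integrable (fun ω => ‖x ω - xstar‖ ^ 2) μ := by
    have h1 : MemLp (fun ω => x ω - xstar) 2 μ := hx2.sub (memLp_const _)
    exact (memLp_two_iff_integrable_sq_norm h1.aestronglyMeasurable).1 h1
  have hgle : ∀ ω, F (xhat ω) - F xstar + ℓ * ‖xhat ω - x ω‖ ^ 2 ≤ ℓ * ‖x ω - xstar‖ ^ 2 := by
    intro ω
    have h := (hprox ω).2 xstar hxstar
    rw [hco] at h
    have hn : ‖xstar - x ω‖ = ‖x ω - xstar‖ := norm_sub_rev _ _
    rw [hn] at h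
    linarith
  have hg0 : ∀ ω, 0 ≤ F (xhat ω) - F xstar + ℓ * ‖xhat ω - x ω‖ ^ 2 := by
    intro ω
    have h1 := hFmin _ (hprox ω).1
    nlinarith [sq_nonneg ‖xhat ω - x ω‖]
  have hgint : Integrable (fun ω => F (xhat ω) - F xstar + ℓ * ‖xhat ω - x ω‖ ^ 2) μ := by
    rw [hgfun]
    refine Integrable.mono' (hxs2.const_mul ℓ)
      ((hMcont.comp_aestronglyMeasurable hx2.aestronglyMeasurable).sub
        aestronglyMeasurable_const) ?_
    filter_upwards with ω
    have h0 := hg0 ω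
    have h1 := hgle ω
    have h2 := hMeq ω
    have hb : 0 ≤ ℓ * ‖x ω - xstar‖ ^ 2 := by positivity
    rw [Real.norm_eq_abs, abs_le]
    constructor <;> linarith
  calc (∫ ω, ‖x ω - xstar‖ ^ 2 ∂μ)
      ≤ ∫ ω, C * (F (xhat ω) - F xstar + ℓ * ‖xhat ω - x ω‖ ^ 2) ∂μ := by
        apply integral_mono_of_nonneg
        · filter_upwards with ω; positivity
        · exact hgint.const_mul C
        · filter_upwards with ω; exact hkey ω
    _ = C * ∫ ω, (F (xhat ω) - F xstar + ℓ * ‖xhat ω - x ω‖ ^ 2) ∂μ := integral_const_mul C _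
    _ ≤ C * ε := mul_le_mul_of_nonneg_left hgap hCpos.le
end
end

section
/- Let F : ℝ^d → ℝ be differentiable with ‖∇F(x) − ∇F(y)‖ ≤ L‖x − y‖ for all x, y ∈ ℝ^d (L > 0), let β ∈ (0,1], let x, x⁺, g ∈ ℝ^d be fixed, and let G be a square-integrable random vector with E[G] = ∇F(x⁺) and E‖G − ∇F(x⁺)‖² ≤ σ². Define g⁺ := (1 − β) g + β G. Then E‖g⁺ − ∇F(x⁺)‖² ≤ (1 − β)‖g − ∇F(x)‖² + (3L²/β)‖x − x⁺‖² + β² σ². -/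
open MeasureTheory
open scoped RealInnerProductSpace

noncomputable section

/-- Lemma 6.1 (momentum error recursion): one-step error control for the Polyak heavy-ball
gradient estimator. -/
theorem momentum_error_recursion {d : ℕ}
    {Ω : Type} [MeasurableSpace Ω] (μ : Measure Ω) [IsProbabilityMeasure μ]
    (F : EuclideanSpace ℝ (Fin d) → ℝ) (F' : EuclideanSpace ℝ (Fin d) → EuclideanSpace ℝ (Fin d)) (L σ β : ℝ) (hL : 0 < L)
    (hgrad : ∀ y, HasGradientAt F (F' y) y)
    (hLip : ∀ u v : EuclideanSpace ℝ (Fin d), ‖F' u - F' v‖ ≤ L * ‖u - v‖)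
    (hβ : β ∈ Set.Ioc (0 : ℝ) 1)
    (x xplus g : EuclideanSpace ℝ (Fin d))
    (G : Ω → EuclideanSpace ℝ (Fin d)) (hG2 : MemLp G 2 μ)
    (hmean : (∫ ω, G ω ∂μ) = F' xplus)
    (hvarG : (∫ ω, ‖G ω - F' xplus‖ ^ 2 ∂μ) ≤ σ ^ 2) :
    (∫ ω, ‖(1 - β) • g + β • G ω - F' xplus‖ ^ 2 ∂μ) ≤
      (1 - β) * ‖g - F' x‖ ^ 2 + 3 * L ^ 2 / β * ‖x - xplus‖ ^ 2 + β ^ 2 * σ ^ 2 := by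
  obtain ⟨hβ0, hβ1⟩ := hβ
  set c := F' xplus with hc
  have hGint : Integrable G μ := hG2.integrable (by norm_num)
  have hH2 : MemLp (fun ω => G ω - c) 2 μ := hG2.sub (memLp_const c)
  have hHint : Integrable (fun ω => G ω - c) μ := hGint.sub (integrable_const c)
  have hHmean : (∫ ω, (G ω - c) ∂μ) = 0 := by
    rw [integral_sub hGint (integrable_const c), hmean, integral_const]
    simp
  set a := (1 - β) • (g - c) with ha
  have hinner_int : Integrable (fun ω => ⟪a, G ω - c⟫) μ :=
    (innerSL ℝ a).integrable_comp hHint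
  have hnorm_sq_int : Integrable (fun ω => ‖G ω - c‖ ^ 2) μ := hH2.norm.integrable_sq
  have hmain : (∫ ω, ‖(1 - β) • g + β • G ω - c‖ ^ 2 ∂μ)
      = ‖a‖ ^ 2 + β ^ 2 * ∫ ω, ‖G ω - c‖ ^ 2 ∂μ := by
    have hrw : ∀ ω, ‖(1 - β) • g + β • G ω - c‖ ^ 2
        = ‖a‖ ^ 2 + (2 * β) * ⟪a, G ω - c⟫ + β ^ 2 * ‖G ω - c‖ ^ 2 := by
      intro ω
      have h1 : (1 - β) • g + β • G ω - c = a + β • (G ω - c) := by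
        rw [ha]; module
      rw [h1, norm_add_sq_real, real_inner_smul_right]
      simp only [norm_smul, Real.norm_eq_abs, abs_of_pos hβ0]
      ring
    calc (∫ ω, ‖(1 - β) • g + β • G ω - c‖ ^ 2 ∂μ)
        = ∫ ω, (‖a‖ ^ 2 + (2 * β) * ⟪a, G ω - c⟫ + β ^ 2 * ‖G ω - c‖ ^ 2) ∂μ := by
          exact integral_congr_ae (Filter.Eventually.of_forall hrw)
      _ = ‖a‖ ^ 2 + β ^ 2 * ∫ ω, ‖G ω - c‖ ^ 2 ∂μ := by
          have i1 : Integrable (fun ω => (2 * β) * ⟪a, G ω - c⟫) μ := hinner_int.const_mul _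
          have i2 : Integrable (fun ω => β ^ 2 * ‖G ω - c‖ ^ 2) μ := hnorm_sq_int.const_mul _
          have i0 : Integrable (fun ω => ‖a‖ ^ 2 + (2 * β) * ⟪a, G ω - c⟫) μ :=
            (integrable_const _).add i1
          rw [integral_add i0 i2, integral_add (integrable_const _) i1,
            integral_const, integral_const_mul, integral_const_mul]
          have : (∫ ω, ⟪a, G ω - c⟫ ∂μ) = ⟪a, (0 : EuclideanSpace ℝ (Fin d))⟫ := by
            rw [← hHmean, integral_inner hHint]
          rw [this]
          simp
  rw [hmain]
  have hna : ‖a‖ ^ 2 = (1 - β) ^ 2 * ‖g - c‖ ^ 2 := by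
    rw [ha, norm_smul, Real.norm_eq_abs, abs_of_nonneg (by linarith : (0:ℝ) ≤ 1 - β)]
    ring
  -- deterministic bound
  set u := ‖g - F' x‖ with hu
  set w := ‖x - xplus‖ with hw
  have hvle : ‖g - c‖ ≤ u + L * w := by
    calc ‖g - c‖ = ‖(g - F' x) + (F' x - c)‖ := by rw [sub_add_sub_cancel]
      _ ≤ ‖g - F' x‖ + ‖F' x - c‖ := norm_add_le _ _
      _ ≤ u + L * w := by
          have := hLip x xplus
          rw [hu, hw]; linarith
  have hu0 : 0 ≤ u := norm_nonneg _
  have hw0 : 0 ≤ L * w := mul_nonneg hL.le (norm_nonneg _)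
  have hv0 : 0 ≤ ‖g - c‖ := norm_nonneg _
  have key : (1 - β) ^ 2 * ‖g - c‖ ^ 2 ≤ (1 - β) * u ^ 2 + 3 * L ^ 2 / β * w ^ 2 := by
    have h1 : β * ((1 - β) ^ 2 * ‖g - c‖ ^ 2) ≤ β * ((1 - β) * u ^ 2) + 3 * (L * w) ^ 2 := by
      have hP : (0:ℝ) ≤ (u + L * w - ‖g - c‖) * (u + L * w + ‖g - c‖) :=
        mul_nonneg (by linarith) (by linarith)
      have t1 : (0:ℝ) ≤ β * (1 - β) ^ 2 *
          ((u + L * w - ‖g - c‖) * (u + L * w + ‖g - c‖)) :=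
        mul_nonneg (mul_nonneg hβ0.le (sq_nonneg _)) hP
      have t2 : (0:ℝ) ≤ (1 - β) * (β * u - (1 - β) * (L * w)) ^ 2 :=
        mul_nonneg (by linarith) (sq_nonneg _)
      have t3 : (0:ℝ) ≤ β * (2 - β) * (L * w) ^ 2 :=
        mul_nonneg (mul_nonneg hβ0.le (by linarith)) (sq_nonneg _)
      have t4 : (0:ℝ) ≤ 2 * (L * w) ^ 2 := by positivity
      have e : β * ((1 - β) * u ^ 2) + 3 * (L * w) ^ 2 - β * ((1 - β) ^ 2 * ‖g - c‖ ^ 2)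
          = β * (1 - β) ^ 2 * ((u + L * w - ‖g - c‖) * (u + L * w + ‖g - c‖))
            + (1 - β) * (β * u - (1 - β) * (L * w)) ^ 2
            + β * (2 - β) * (L * w) ^ 2 + 2 * (L * w) ^ 2 := by ring
      linarith
    have h2 : (1 - β) ^ 2 * ‖g - c‖ ^ 2 - (1 - β) * u ^ 2 ≤ 3 * L ^ 2 * w ^ 2 / β := by
      rw [le_div_iff₀ hβ0]
      nlinarith [h1]
    have h3 : 3 * L ^ 2 / β * w ^ 2 = 3 * L ^ 2 * w ^ 2 / β := by ring
    linarith
  have hvar : β ^ 2 * (∫ ω, ‖G ω - c‖ ^ 2 ∂μ) ≤ β ^ 2 * σ ^ 2 :=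
    mul_le_mul_of_nonneg_left hvarG (sq_nonneg β)
  linarith [hna ▸ key]
end
end
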